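/- arXiv:1306.3668 — 3 statements merged into one kernel-verified Lean document; each statement's English description precedes it below -/
import Mathlib

section
/- Let p be an odd prime, K a field of characteristic p with prime field K', N = (p+1)/2, and let I ⊆ K[x₀,…,x_N] be the ideal of all K'-points of P^N except one. Then I^{((p+3)/2)} is not contained in I², i.e., the containment I^{(Nr - (N-1))} ⊆ I^r fails for r = 2. -/
open MvPolynomial

/-- The homogeneous ideal of a point of projective space (given by a
representative `π`). -/
noncomputable def pointIdeal {K : Type} [Field K] {n : ℕ} (π : Fin n → K) :
    Ideal (MvPolynomial (Fin n) K) :=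
  Ideal.span {f | (∃ d, f.IsHomogeneous d) ∧ eval π f = 0}

namespace Stmt13Aux

open Finset

/-! ### Sums of powers over `ZMod p` -/

variable {p : ℕ}

theorem sum_pow_zmod_eq_zero [hpf : Fact p.Prime] {k : ℕ} (hk : ¬(0 < k ∧ (p - 1) ∣ k)) :
    ∑ t : ZMod p, t ^ k = 0 := by
  have hp2 : 2 ≤ p := hpf.out.two_le
  rcases Nat.eq_zero_or_pos k with h0 | hpos
  · subst h0
    simp only [pow_zero, Finset.sum_const, Finset.card_univ, ZMod.card, nsmul_eq_mul, mul_one]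
    exact ZMod.natCast_self p
  · have hnd : ¬ (p - 1) ∣ k := fun hd => hk ⟨hpos, hd⟩
    have hk'0 : k % (p - 1) ≠ 0 := fun h => hnd (Nat.dvd_of_mod_eq_zero h)
    have hk'lt : k % (p - 1) < p - 1 := Nat.mod_lt _ (by omega)
    have heq : ∀ t : ZMod p, t ^ k = t ^ (k % (p - 1)) := by
      intro t
      by_cases ht : t = 0
      · subst ht
        rw [zero_pow hpos.ne', zero_pow hk'0]
      · conv_lhs => rw [← Nat.div_add_mod k (p - 1)]
        rw [pow_add, pow_mul, ZMod.pow_card_sub_one_eq_one ht, one_pow, one_mul]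
    rw [Finset.sum_congr rfl fun t _ => heq t]
    exact FiniteField.sum_pow_lt_card_sub_one (K := ZMod p) (k % (p - 1))
      (by rw [ZMod.card]; exact hk'lt)

theorem sum_pow_zmod_eq_neg_one [hpf : Fact p.Prime] {k : ℕ} (hk : 0 < k)
    (hd : (p - 1) ∣ k) : ∑ t : ZMod p, t ^ k = -1 := by
  have hp2 : 2 ≤ p := hpf.out.two_le
  have heq : ∀ t : ZMod p, t ^ k = if t = 0 then 0 else 1 := by
    intro t
    by_cases ht : t = 0
    · simp [ht, zero_pow hk.ne']
    · obtain ⟨c, rfl⟩ := hd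
      simp only [ht, if_false]
      rw [pow_mul, ZMod.pow_card_sub_one_eq_one ht, one_pow]
  rw [Finset.sum_congr rfl fun t _ => heq t, Finset.sum_ite, Finset.sum_const, Finset.sum_const,
    smul_zero, nsmul_eq_mul, mul_one, zero_add, Finset.filter_ne',
    Finset.card_erase_of_mem (Finset.mem_univ _), Finset.card_univ, ZMod.card]
  rw [Nat.cast_sub (by omega), ZMod.natCast_self, Nat.cast_one, zero_sub]

/-! ### Homogeneous polynomial generalities -/

theorem eval_mul_of_isHomogeneous {σ K : Type*} [Fintype σ] [CommSemiring K]
    {f : MvPolynomial σ K} {n : ℕ} (hf : f.IsHomogeneous n) (c : K) (x : σ → K) :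
    eval (fun i => c * x i) f = c ^ n * eval x f := by
  rw [eval_eq', eval_eq', Finset.mul_sum]
  refine Finset.sum_congr rfl fun d hd => ?_
  have hdeg : ∑ i, d i = n := by
    have h1 : (Finsupp.weight 1) d = n := hf (mem_support_iff.mp hd)
    rw [show (Finsupp.weight 1 : _ →+ ℕ) = Finsupp.weight (fun _ => 1) from rfl, ← Finsupp.degree_eq_weight_one] at h1
    rw [← h1, Finsupp.degree_apply]
    exact (Finset.sum_subset (Finset.subset_univ _)
      (fun i _ hi => Finsupp.notMem_support_iff.mp hi)).symm
  calc coeff d f * ∏ i, (c * x i) ^ d i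
      = coeff d f * ((∏ i, c ^ d i) * ∏ i, x i ^ d i) := by
        rw [← Finset.prod_mul_distrib]
        simp_rw [mul_pow]
    _ = c ^ n * (coeff d f * ∏ i, x i ^ d i) := by
        rw [Finset.prod_pow_eq_pow_sum, hdeg]; ring

theorem eval_eq_zero_of_mem_pointIdeal {K : Type} [Field K] {n : ℕ} {π : Fin n → K}
    {f : MvPolynomial (Fin n) K} (hf : f ∈ pointIdeal π) : eval π f = 0 := by
  refine Submodule.span_induction (p := fun x _ => eval π x = 0) ?_ ?_ ?_ ?_ hf
  · rintro x ⟨-, hx⟩; exact hx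
  · simp
  · intro x y _ _ hx hy; rw [map_add, hx, hy, add_zero]
  · intro a x _ hx; rw [smul_eq_mul, map_mul, hx, mul_zero]

theorem homogeneousComponent_mem_pointIdeal {K : Type} [Field K] {n : ℕ} {π : Fin n → K}
    {f : MvPolynomial (Fin n) K} (hf : f ∈ pointIdeal π) :
    ∀ k, homogeneousComponent k f ∈ pointIdeal π := by
  refine Submodule.span_induction
    (p := fun x _ => ∀ k, homogeneousComponent k x ∈ pointIdeal π) ?_ ?_ ?_ ?_ hf
  · rintro x ⟨⟨dx, hdx⟩, hx0⟩ k
    rw [homogeneousComponent_of_mem ((mem_homogeneousSubmodule _ _).2 hdx)]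
    split
    · exact Ideal.subset_span ⟨⟨dx, hdx⟩, hx0⟩
    · exact Ideal.zero_mem _
  · intro k; rw [map_zero]; exact Ideal.zero_mem _
  · intro x y _ _ hx hy k; rw [map_add]; exact Ideal.add_mem _ (hx k) (hy k)
  · intro r x _ hx k
    rw [smul_eq_mul]
    have hxr : r * x = ∑ i ∈ Finset.range (r.totalDegree + 1),
        ∑ j ∈ Finset.range (x.totalDegree + 1),
          homogeneousComponent i r * homogeneousComponent j x := by
      conv_lhs => rw [← sum_homogeneousComponent r, ← sum_homogeneousComponent x]
      rw [Finset.sum_mul_sum]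
    rw [hxr, map_sum]
    refine Ideal.sum_mem _ fun i _ => ?_
    rw [map_sum]
    refine Ideal.sum_mem _ fun j _ => ?_
    rw [homogeneousComponent_of_mem ((mem_homogeneousSubmodule _ _).2
      ((homogeneousComponent_isHomogeneous i r).mul (homogeneousComponent_isHomogeneous j x)))]
    split
    · exact Ideal.mul_mem_left _ _ (hx j)
    · exact Ideal.zero_mem _

theorem prod_mem_pow_card {R : Type*} [CommRing R] (P : Ideal R) {β : Type*} [DecidableEq β]
    (s : Finset β) (f : β → R) (h : ∀ x ∈ s, f x ∈ P) : (∏ x ∈ s, f x) ∈ P ^ s.card := by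
  induction s using Finset.induction with
  | empty => simp
  | @insert a s ha ih =>
    rw [Finset.prod_insert ha, Finset.card_insert_of_notMem ha, pow_succ']
    exact Ideal.mul_mem_mul (h _ (Finset.mem_insert_self _ _))
      (ih fun x hx => h x (Finset.mem_insert_of_mem hx))

/-! ### The coefficient pattern for the witness, and the counting lemma -/

/-- coefficient pattern for the witness hyperplanes -/
def cf {N : ℕ} (j : Fin N) (u v : ZMod p) : ZMod p :=
  if (j : ℕ) = 0 then u else v * u ^ ((j : ℕ) - 1)

theorem counting [hpf : Fact p.Prime] {N mm : ℕ} (hN : 2 * N = p + 1) (hmm : 2 * mm = p + 3)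
    (hp3 : 3 ≤ p) (c₀ : ZMod p) (b : Fin N → ZMod p) (hb : b ≠ 0) :
    mm ≤ (Finset.univ.filter fun uv : ZMod p × ZMod p =>
        c₀ + ∑ j, b j * cf j uv.1 uv.2 = 0).card := by
  have hNpos : 0 < N := by omega
  set j₀ : Fin N := ⟨0, hNpos⟩ with hj₀
  set P : Polynomial (ZMod p) :=
    ∑ j ∈ Finset.univ.erase j₀, Polynomial.C (b j) * Polynomial.X ^ ((j : ℕ) - 1) with hP
  have hvalne : ∀ j ∈ Finset.univ.erase j₀, (j : ℕ) ≠ 0 := by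
    intro j hj
    have := Finset.ne_of_mem_erase hj
    simpa [Fin.ext_iff, hj₀] using this
  have hsum : ∀ u v : ZMod p, c₀ + ∑ j, b j * cf j u v
      = c₀ + u * b j₀ + v * P.eval u := by
    intro u v
    rw [← Finset.sum_erase_add _ _ (Finset.mem_univ j₀)]
    have h1 : ∑ j ∈ Finset.univ.erase j₀, b j * cf j u v = v * P.eval u := by
      rw [hP, Polynomial.eval_finset_sum, Finset.mul_sum]
      refine Finset.sum_congr rfl fun j hj => ?_
      rw [cf, if_neg (hvalne j hj)]
      simp only [Polynomial.eval_mul, Polynomial.eval_C, Polynomial.eval_pow, Polynomial.eval_X]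
      ring
    rw [h1, cf, if_pos rfl]
    ring
  by_cases hcase : ∀ j ∈ Finset.univ.erase j₀, b j = 0
  · have hb0 : b j₀ ≠ 0 := by
      intro h0
      apply hb
      funext j
      by_cases hj : j = j₀
      · rw [hj]; exact h0
      · exact hcase j (Finset.mem_erase.2 ⟨hj, Finset.mem_univ _⟩)
    have hPe : ∀ u : ZMod p, P.eval u = 0 := by
      intro u
      rw [hP, Polynomial.eval_finset_sum]
      refine Finset.sum_eq_zero fun j hj => ?_
      rw [hcase j hj]
      simp
    have hinj : mm ≤ (Finset.univ : Finset (ZMod p)).card := by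
      rw [Finset.card_univ, ZMod.card]; omega
    refine le_trans hinj (Finset.card_le_card_of_injOn
      (fun v => (-c₀ * (b j₀)⁻¹, v)) ?_ ?_)
    · intro v _
      refine Finset.mem_filter.2 ⟨Finset.mem_univ _, ?_⟩
      rw [hsum, hPe, mul_zero, add_zero, mul_assoc, inv_mul_cancel₀ hb0, mul_one]
      ring
    · intro u _ u' _ h
      exact congrArg Prod.snd h
  · push_neg at hcase
    obtain ⟨j₁, hj₁mem, hbj₁⟩ := hcase
    have hPne : P ≠ 0 := by
      intro h0
      have hc : P.coeff ((j₁ : ℕ) - 1) = b j₁ := by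
        rw [hP, Polynomial.finset_sum_coeff]
        rw [Finset.sum_eq_single j₁]
        · simp [Polynomial.coeff_C_mul, Polynomial.coeff_X_pow]
        · intro j hj hne
          simp only [Polynomial.coeff_C_mul, Polynomial.coeff_X_pow]
          rw [if_neg, mul_zero]
          intro heq
          have h1 := hvalne j hj
          have h2 := hvalne j₁ hj₁mem
          exact hne (Fin.ext (by omega))
        · intro h; exact absurd hj₁mem h
      rw [h0, Polynomial.coeff_zero] at hc
      exact hbj₁ hc.symm
    have hdeg : P.natDegree ≤ N - 2 := by
      refine Polynomial.natDegree_sum_le_of_forall_le _ _ fun j hj => ?_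
      refine le_trans (Polynomial.natDegree_C_mul_X_pow_le _ _) ?_
      have := j.isLt
      have := hvalne j hj
      omega
    set Rts := Finset.univ.filter (fun u : ZMod p => P.eval u = 0) with hRts
    have hR : Rts.card ≤ N - 2 := by
      calc Rts.card ≤ P.roots.toFinset.card := by
            refine Finset.card_le_card fun u hu => ?_
            rw [Multiset.mem_toFinset, Polynomial.mem_roots hPne]
            exact (Finset.mem_filter.1 hu).2
        _ ≤ Multiset.card P.roots := P.roots.toFinset_card_le
        _ ≤ P.natDegree := Polynomial.card_roots' P
        _ ≤ N - 2 := hdeg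
    have hgood : mm ≤ (Finset.univ \ Rts).card := by
      rw [Finset.card_sdiff_of_subset (Finset.subset_univ _), Finset.card_univ, ZMod.card]
      omega
    refine le_trans hgood (Finset.card_le_card_of_injOn
      (fun u => (u, -(c₀ + u * b j₀) * (P.eval u)⁻¹)) ?_ ?_)
    · intro u hu
      have hPe : P.eval u ≠ 0 := by
        have := (Finset.mem_sdiff.1 hu).2
        simpa [hRts] using this
      refine Finset.mem_filter.2 ⟨Finset.mem_univ _, ?_⟩
      rw [hsum, mul_assoc, inv_mul_cancel₀ hPe, mul_one]
      ring
    · intro u _ u' _ h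
      exact congrArg Prod.fst h

theorem p2eq {p N : ℕ} (hp3 : 3 ≤ p) (hN : 2 * N = p + 1) :
    p ^ 2 = 2 * (N * (p - 1)) + 1 := by
  obtain ⟨x, hx⟩ : ∃ x, p = x + 1 := ⟨p - 1, by omega⟩
  subst hx
  have h1 : x + 1 - 1 = x := by omega
  have h3 : 2 * (N * x) = (2 * N) * x := by ring
  rw [h1, pow_two, h3, hN]
  ring

/-! ### The key vanishing lemma -/

theorem key {p N : ℕ} [hpf : Fact p.Prime] (hp3 : 3 ≤ p) {K : Type} [Field K] [CharP K p]
    (q : Fin (N + 1) → K) (i₀ : Fin (N + 1)) (hqi : q i₀ ≠ 0)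
    (vq : Fin (N + 1) → ZMod p)
    (hvq : ∀ i, (ZMod.castHom (dvd_refl p) K) (vq i) = q i)
    {a : MvPolynomial (Fin (N + 1)) K} {d : ℕ} (ha : a.IsHomogeneous d)
    (hd1 : 1 ≤ d) (hd2 : d ≤ N * (p - 1))
    (hvan : ∀ v : Fin (N + 1) → ZMod p, (¬∃ c : ZMod p, v = c • vq) →
      MvPolynomial.eval (fun i => (ZMod.castHom (dvd_refl p) K) (v i)) a = 0) :
    MvPolynomial.eval q a = 0 := by
  set φ := ZMod.castHom (dvd_refl p) K with hφ
  set k := (p - 1) * ((d + p - 2) / (p - 1)) with hk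
  have hdk : d ≤ k := by
    have h1 := Nat.div_add_mod (d + p - 2) (p - 1)
    have h2 := Nat.mod_lt (d + p - 2) (show 0 < p - 1 by omega)
    omega
  have hX : (N + 1) * (p - 1) = N * (p - 1) + (p - 1) := by ring
  have hkN : k ≤ N * (p - 1) := by
    have h1 : (d + p - 2) / (p - 1) < N + 1 := by
      rw [Nat.div_lt_iff_lt_mul (show 0 < p - 1 by omega)]
      omega
    calc k = ((d + p - 2) / (p - 1)) * (p - 1) := by rw [hk]; ring
      _ ≤ N * (p - 1) := Nat.mul_le_mul_right _ (by omega)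
  set e := k - d with he
  have hke : d + e = k := by omega
  set T : K := ∑ v : Fin (N + 1) → ZMod p,
      (MvPolynomial.eval (fun i => φ (v i)) a) * (φ (v i₀)) ^ e with hT
  have hswap : ∀ g : Fin (N + 1) → ZMod p → K,
      ∑ v : Fin (N + 1) → ZMod p, ∏ i, g i (v i) = ∏ i, ∑ t : ZMod p, g i t := by
    intro g
    rw [← Finset.sum_prod_piFinset Finset.univ g, Fintype.piFinset_univ]
  have hTzero : T = 0 := by
    have hrw : ∀ v : Fin (N + 1) → ZMod p,
        (MvPolynomial.eval (fun i => φ (v i)) a) * (φ (v i₀)) ^ e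
        = ∑ α ∈ a.support, MvPolynomial.coeff α a *
            ∏ i, φ (v i) ^ (α i + if i = i₀ then e else 0) := by
      intro v
      rw [MvPolynomial.eval_eq', Finset.sum_mul]
      refine Finset.sum_congr rfl fun α _ => ?_
      rw [mul_assoc]
      congr 1
      have h2 : ∀ i : Fin (N + 1), φ (v i) ^ (α i + if i = i₀ then e else 0)
          = φ (v i) ^ α i * (if i = i₀ then φ (v i) ^ e else 1) := by
        intro i
        rw [pow_add]
        congr 1
        split <;> simp
      rw [Finset.prod_congr rfl fun i _ => h2 i, Finset.prod_mul_distrib,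
        Finset.prod_ite_eq' Finset.univ i₀ (fun i => φ (v i) ^ e), if_pos (Finset.mem_univ _)]
    rw [hT, Finset.sum_congr rfl fun v _ => hrw v, Finset.sum_comm]
    refine Finset.sum_eq_zero fun α hα => ?_
    rw [← Finset.mul_sum, hswap (fun i t => φ t ^ (α i + if i = i₀ then e else 0))]
    have hαd : ∑ i, α i = d := by
      have h1 : (Finsupp.weight 1) α = d := ha (MvPolynomial.mem_support_iff.mp hα)
      rw [show (Finsupp.weight 1 : _ →+ ℕ) = Finsupp.weight (fun _ => 1) from rfl, ← Finsupp.degree_eq_weight_one] at h1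
      rw [← h1, Finsupp.degree_apply]
      exact (Finset.sum_subset (Finset.subset_univ _)
        (fun i _ hi => Finsupp.notMem_support_iff.mp hi)).symm
    have hex : ∃ i, ∑ t : ZMod p, t ^ (α i + if i = i₀ then e else 0) = 0 := by
      by_contra hall
      push_neg at hall
      have hge : ∀ i, p - 1 ≤ α i + (if i = i₀ then e else 0) := by
        intro i
        have h0 : 0 < α i + (if i = i₀ then e else 0) ∧
            (p - 1) ∣ (α i + (if i = i₀ then e else 0)) :=
          not_not.mp (fun h => hall i (sum_pow_zmod_eq_zero h))
        exact Nat.le_of_dvd h0.1 h0.2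
      have hsumβ : ∑ i, (α i + if i = i₀ then e else 0) = d + e := by
        rw [Finset.sum_add_distrib, hαd, Finset.sum_ite_eq' Finset.univ i₀ (fun _ => e),
          if_pos (Finset.mem_univ _)]
      have hcard : (N + 1) * (p - 1) ≤ ∑ i : Fin (N + 1), (α i + if i = i₀ then e else 0) := by
        calc (N + 1) * (p - 1) = ∑ _i : Fin (N + 1), (p - 1) := by
              rw [Finset.sum_const, Finset.card_univ, Fintype.card_fin, smul_eq_mul]
          _ ≤ _ := Finset.sum_le_sum fun i _ => hge i
      omega
    obtain ⟨i₁, hi₁⟩ := hex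
    have hz : ∑ t : ZMod p, φ t ^ (α i₁ + if i₁ = i₀ then e else 0) = 0 := by
      have h5 : ∀ t : ZMod p, φ t ^ (α i₁ + if i₁ = i₀ then e else 0)
          = φ (t ^ (α i₁ + if i₁ = i₀ then e else 0)) := fun t => (map_pow φ t _).symm
      rw [Finset.sum_congr rfl fun t _ => h5 t, ← map_sum, hi₁, map_zero]
    rw [Finset.prod_eq_zero (Finset.mem_univ i₁) hz, mul_zero]
  have hvq0 : vq i₀ ≠ 0 := fun h => hqi (by rw [← hvq i₀, h, map_zero])
  have hTline : T = -(MvPolynomial.eval q a * (q i₀) ^ e) := by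
    have hsplit : T = ∑ v ∈ Finset.image (fun c : ZMod p => c • vq) Finset.univ,
        (MvPolynomial.eval (fun i => φ (v i)) a) * (φ (v i₀)) ^ e := by
      rw [hT]
      refine (Finset.sum_subset (Finset.subset_univ _) fun v _ hv => ?_).symm
      have hnotline : ¬∃ c : ZMod p, v = c • vq := by
        rintro ⟨c, hc⟩
        exact hv (Finset.mem_image.2 ⟨c, Finset.mem_univ _, hc.symm⟩)
      rw [hvan v hnotline, zero_mul]
    rw [hsplit, Finset.sum_image (fun c1 _ c2 _ h => by
      have h0 := congrFun h i₀
      simp only [Pi.smul_apply, smul_eq_mul] at h0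
      exact mul_right_cancel₀ hvq0 h0)]
    have hterm : ∀ c : ZMod p,
        (MvPolynomial.eval (fun i => φ ((c • vq) i)) a) * (φ ((c • vq) i₀)) ^ e
        = φ c ^ k * (MvPolynomial.eval q a * (q i₀) ^ e) := by
      intro c
      have h1 : (fun i => φ ((c • vq) i)) = fun i => φ c * q i := by
        funext i
        simp only [Pi.smul_apply, smul_eq_mul, map_mul, hvq]
      have h2 : φ ((c • vq) i₀) = φ c * q i₀ := by
        simp only [Pi.smul_apply, smul_eq_mul, map_mul, hvq]
      rw [h1, eval_mul_of_isHomogeneous ha (φ c) q, h2, mul_pow,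
        show k = d + e from hke.symm, pow_add]
      ring
    rw [Finset.sum_congr rfl fun c _ => hterm c, ← Finset.sum_mul]
    have h3 : ∑ c : ZMod p, φ c ^ k = -1 := by
      have h5 : ∀ c : ZMod p, φ c ^ k = φ (c ^ k) := fun c => (map_pow φ c _).symm
      rw [Finset.sum_congr rfl fun c _ => h5 c, ← map_sum,
        sum_pow_zmod_eq_neg_one (by omega) (by rw [hk]; exact dvd_mul_right _ _),
        map_neg, map_one]
    rw [h3]
    ring
  rw [hTzero] at hTline
  have h4 : MvPolynomial.eval q a * (q i₀) ^ e = 0 := by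
    have h6 := hTline.symm
    rwa [neg_eq_zero] at h6
  rcases mul_eq_zero.mp h4 with h5 | h5
  · exact h5
  · exact absurd h5 (pow_ne_zero _ hqi)

end Stmt13Aux

open Stmt13Aux

theorem stmt13 (p N m : ℕ) (hp : p.Prime) (hodd : Odd p)
    (hN : 2 * N = p + 1) (hm : 2 * m = p + 3)
    (K : Type) [Field K] [CharP K p]
    (q : Fin (N + 1) → K) (hq : q ≠ 0)
    (hq' : ∀ i, q i ∈ Set.range (Nat.cast : ℕ → K)) :
    let S : Set (Fin (N + 1) → K) :=
      {π | π ≠ 0 ∧ (∀ i, π i ∈ Set.range (Nat.cast : ℕ → K)) ∧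
        ¬∃ c : K, π = c • q}
    let I : Ideal (MvPolynomial (Fin (N + 1)) K) := ⨅ π ∈ S, pointIdeal π
    -- I^{((p+3)/2)} ⊄ I², i.e. I^{(Nr-(N-1))} ⊆ I^r fails for r = 2
    ¬ (⨅ π ∈ S, (pointIdeal π) ^ m) ≤ I ^ 2 := by
  intro S I hle
  haveI : Fact p.Prime := ⟨hp⟩
  have hp3 : 3 ≤ p := by
    rcases hodd with ⟨t, ht⟩
    have := hp.two_le
    omega
  have hN2 : 2 ≤ N := by omega
  set φ := ZMod.castHom (dvd_refl p) K with hφ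
  have hφinj : Function.Injective φ := φ.injective
  obtain ⟨i₀, hqi⟩ : ∃ i, q i ≠ 0 := by
    by_contra h
    push_neg at h
    exact hq (funext h)
  choose nq hnq using hq'
  set vq : Fin (N + 1) → ZMod p := fun i => ((nq i : ℕ) : ZMod p) with hvqdef
  have hvq : ∀ i, φ (vq i) = q i := by
    intro i
    rw [hvqdef]
    simp only [map_natCast]
    exact hnq i
  have hvq0 : vq i₀ ≠ 0 := fun h => hqi (by rw [← hvq i₀, h, map_zero])
  -- grid points off the line of `q` are in `S`
  have hgridS : ∀ v : Fin (N + 1) → ZMod p, (¬∃ c : ZMod p, v = c • vq) →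
      (fun i => φ (v i)) ∈ S := by
    intro v hv
    refine ⟨?_, ?_, ?_⟩
    · intro h0
      apply hv
      refine ⟨0, ?_⟩
      funext i
      have h1 : φ (v i) = 0 := congrFun h0 i
      have h2 : v i = 0 := hφinj (by rwa [map_zero])
      simp [h2]
    · intro i
      exact ⟨(v i).val, by rw [ZMod.natCast_val, ← ZMod.castHom_apply (h := dvd_refl p)]⟩
    · rintro ⟨c, hc⟩
      have hci : φ (v i₀) = c * q i₀ := by
        have := congrFun hc i₀
        simpa [Pi.smul_apply, smul_eq_mul] using this
      set c' := v i₀ * (vq i₀)⁻¹ with hc'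
      have hφc' : φ c' = c := by
        rw [hc', map_mul, map_inv₀, hvq i₀, hci, mul_assoc, mul_inv_cancel₀ hqi, mul_one]
      apply hv
      refine ⟨c', ?_⟩
      funext i
      have h5 : φ (v i) = φ (c' * vq i) := by
        rw [map_mul, hφc', hvq i]
        have := congrFun hc i
        simpa [Pi.smul_apply, smul_eq_mul] using this
      have := hφinj h5
      simpa [Pi.smul_apply, smul_eq_mul] using this
  -- the witness polynomial F
  set LL : ZMod p × ZMod p → MvPolynomial (Fin (N + 1)) K := fun uv =>
    X i₀ + ∑ j : Fin N, C (φ (cf j uv.1 uv.2)) *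
      (C (q i₀) * X (i₀.succAbove j) - C (q (i₀.succAbove j)) * X i₀) with hLL
  set F : MvPolynomial (Fin (N + 1)) K := ∏ uv : ZMod p × ZMod p, LL uv with hF
  have hLhom : ∀ uv, (LL uv).IsHomogeneous 1 := by
    intro uv
    rw [hLL]
    refine (isHomogeneous_X _ _).add ?_
    have h1 : (∑ j : Fin N, C (φ (cf j uv.1 uv.2)) *
        (C (q i₀) * X (i₀.succAbove j) - C (q (i₀.succAbove j)) * X i₀))
        ∈ homogeneousSubmodule (Fin (N + 1)) K 1 := by
      refine Submodule.sum_mem _ fun j _ => ?_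
      rw [mem_homogeneousSubmodule]
      exact (((isHomogeneous_X _ _).C_mul _).sub ((isHomogeneous_X _ _).C_mul _)).C_mul _
    exact (mem_homogeneousSubmodule _ _).1 h1
  have hcard2 : (Finset.univ : Finset (ZMod p × ZMod p)).card = p ^ 2 := by
    rw [Finset.card_univ, Fintype.card_prod, ZMod.card, pow_two]
  have hFhom : F.IsHomogeneous (p ^ 2) := by
    have h := MvPolynomial.IsHomogeneous.prod Finset.univ LL (fun _ => 1)
      (fun uv _ => hLhom uv)
    rw [Finset.sum_const, hcard2, smul_eq_mul, mul_one] at h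
    rw [hF]
    exact h
  have hevalqL : ∀ uv : ZMod p × ZMod p, eval q (LL uv) = q i₀ := by
    intro uv
    rw [hLL]
    simp only [map_add, eval_X, map_sum, map_mul, eval_C, map_sub]
    rw [Finset.sum_eq_zero, add_zero]
    intro j _
    rw [mul_comm (q i₀) (q (i₀.succAbove j)), sub_self, mul_zero]
  have hevalqF : eval q F = q i₀ ^ p ^ 2 := by
    rw [hF, map_prod, Finset.prod_congr rfl fun uv _ => hevalqL uv, Finset.prod_const, hcard2]
  -- membership in the symbolic power
  have hmem : ∀ π ∈ S, F ∈ (pointIdeal π) ^ m := by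
    intro π hπ
    obtain ⟨hπ0, hπr, hπnm⟩ := hπ
    choose nπ hnπ using hπr
    set vπ : Fin (N + 1) → ZMod p := fun i => ((nπ i : ℕ) : ZMod p) with hvπdef
    have hvπ : ∀ i, φ (vπ i) = π i := by
      intro i
      rw [hvπdef]
      simp only [map_natCast]
      exact hnπ i
    set b : Fin N → ZMod p :=
      fun j => vq i₀ * vπ (i₀.succAbove j) - vq (i₀.succAbove j) * vπ i₀ with hb
    have hbne : b ≠ 0 := by
      intro h0
      apply hπnm
      refine ⟨π i₀ * (q i₀)⁻¹, ?_⟩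
      funext i
      rw [Pi.smul_apply, smul_eq_mul]
      by_cases hi : i = i₀
      · subst hi
        field_simp
      · obtain ⟨j, hj⟩ := Fin.exists_succAbove_eq hi
        have h1 : b j = 0 := congrFun h0 j
        rw [hb] at h1
        have h2 : q i₀ * π i - q i * π i₀ = 0 := by
          have h3 := congrArg φ h1
          rw [map_sub, map_mul, map_mul, hvq, hvπ, hvq, hvπ, map_zero, hj] at h3
          exact h3
        have h3 : q i₀ * π i = q i * π i₀ := sub_eq_zero.mp h2
        field_simp
        linear_combination h3
    set Sol := Finset.univ.filter
      (fun uv : ZMod p × ZMod p => vπ i₀ + ∑ j, b j * cf j uv.1 uv.2 = 0) with hSol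
    have hcount : m ≤ Sol.card := counting hN hm hp3 (vπ i₀) b hbne
    obtain ⟨Tm, hTsub, hTcard⟩ := Finset.exists_subset_card_eq hcount
    have hevalL : ∀ uv ∈ Tm, eval π (LL uv) = 0 := by
      intro uv huv
      have h1 : vπ i₀ + ∑ j, b j * cf j uv.1 uv.2 = 0 := (Finset.mem_filter.1 (hTsub huv)).2
      have hLval : eval π (LL uv) = π i₀ + ∑ j, φ (cf j uv.1 uv.2) *
          (q i₀ * π (i₀.succAbove j) - q (i₀.succAbove j) * π i₀) := by
        rw [hLL]
        simp only [map_add, eval_X, map_sum, map_mul, eval_C, map_sub]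
      have h2 : ∀ j : Fin N, q i₀ * π (i₀.succAbove j) - q (i₀.succAbove j) * π i₀
          = φ (b j) := by
        intro j
        rw [hb, map_sub, map_mul, map_mul, hvq, hvπ, hvq, hvπ]
      have h4 : π i₀ + ∑ j, φ (cf j uv.1 uv.2) *
          (q i₀ * π (i₀.succAbove j) - q (i₀.succAbove j) * π i₀)
          = φ (vπ i₀ + ∑ j, b j * cf j uv.1 uv.2) := by
        rw [map_add, map_sum, hvπ]
        congr 1
        refine Finset.sum_congr rfl fun j _ => ?_
        rw [h2 j, map_mul, mul_comm]
      rw [hLval, h4, h1, map_zero]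
    have hLmem : ∀ uv ∈ Tm, LL uv ∈ pointIdeal π := by
      intro uv huv
      exact Ideal.subset_span ⟨⟨1, hLhom uv⟩, hevalL uv huv⟩
    have hsplit : F = (∏ uv ∈ Finset.univ \ Tm, LL uv) * ∏ uv ∈ Tm, LL uv := by
      rw [hF, ← Finset.prod_sdiff (Finset.subset_univ Tm)]
    rw [hsplit]
    have hp1 : (∏ uv ∈ Tm, LL uv) ∈ (pointIdeal π) ^ m := by
      have h5 := prod_mem_pow_card (pointIdeal π) Tm LL hLmem
      rwa [hTcard] at h5
    exact Ideal.mul_mem_left _ _ hp1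
  -- F is in the LHS
  have hFmem : F ∈ ⨅ π ∈ S, (pointIdeal π) ^ m :=
    Ideal.mem_iInf.2 fun π => Ideal.mem_iInf.2 fun hπ => hmem π hπ
  have hF2 : F ∈ I ^ 2 := hle hFmem
  rw [pow_two] at hF2
  -- a point of S
  obtain ⟨i₁, hi₁⟩ : ∃ i₁ : Fin (N + 1), i₁ ≠ i₀ :=
    ⟨i₀.succAbove ⟨0, by omega⟩, Fin.succAbove_ne i₀ _⟩
  set w₀ : Fin (N + 1) → ZMod p := fun i => if i = i₁ then 1 else 0 with hw₀
  have hw₀line : ¬∃ c : ZMod p, w₀ = c • vq := by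
    rintro ⟨c, hc⟩
    have h1 : (0 : ZMod p) = c * vq i₀ := by
      have := congrFun hc i₀
      simpa [hw₀, Pi.smul_apply, smul_eq_mul, (Ne.symm hi₁ : i₀ ≠ i₁)] using this
    have hc0 : c = 0 := by
      rcases mul_eq_zero.mp h1.symm with h | h
      · exact h
      · exact absurd h hvq0
    have h2 : (1 : ZMod p) = 0 := by
      have := congrFun hc i₁
      simpa [hw₀, Pi.smul_apply, smul_eq_mul, hc0] using this
    exact one_ne_zero h2
  have hπ₀S : (fun i => φ (w₀ i)) ∈ S := hgridS w₀ hw₀line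
  -- elements of I vanish on S and their components stay in I
  have hIdeal : ∀ g ∈ I, ∀ π ∈ S, g ∈ pointIdeal π := by
    intro g hg π hπ
    exact Ideal.mem_iInf.1 (Ideal.mem_iInf.1 hg π) hπ
  have hIeval : ∀ g ∈ I, ∀ π ∈ S, eval π g = 0 := by
    intro g hg π hπ
    exact eval_eq_zero_of_mem_pointIdeal (hIdeal g hg π hπ)
  have hIcomp : ∀ g ∈ I, ∀ n, homogeneousComponent n g ∈ I := by
    intro g hg n
    exact Ideal.mem_iInf.2 fun π => Ideal.mem_iInf.2 fun hπ =>
      homogeneousComponent_mem_pointIdeal (hIdeal g hg π hπ) n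
  -- low degree homogeneous elements of I vanish at q
  have key' : ∀ (x : MvPolynomial (Fin (N + 1)) K) (dd : ℕ), x ∈ I → x.IsHomogeneous dd →
      dd ≤ N * (p - 1) → eval q x = 0 := by
    intro x dd hxI hxh hdd
    rcases Nat.eq_zero_or_pos dd with h0 | h1
    · subst h0
      have hx0 : x = C (coeff 0 x) := by
        have h2 : homogeneousComponent 0 x = x := by
          rw [homogeneousComponent_of_mem ((mem_homogeneousSubmodule _ _).2 hxh), if_pos rfl]
        conv_lhs => rw [← h2]
        rw [homogeneousComponent_zero]
      have h3 : eval (fun i => φ (w₀ i)) x = 0 := hIeval x hxI _ hπ₀S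
      calc eval q x = eval q (C (coeff 0 x)) := by conv_lhs => rw [hx0]
        _ = coeff 0 x := eval_C _
        _ = eval (fun i => φ (w₀ i)) (C (coeff 0 x)) := (eval_C _).symm
        _ = eval (fun i => φ (w₀ i)) x := by conv_lhs => rw [← hx0]
        _ = 0 := h3
    · refine key hp3 q i₀ hqi vq hvq hxh h1 hdd ?_
      intro v hv
      exact hIeval x hxI _ (hgridS v hv)
  -- degree bookkeeping
  have hp2eq : p ^ 2 = 2 * (N * (p - 1)) + 1 := p2eq hp3 hN
  -- evaluation of everything in I*I at q is zero in degree p^2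
  have hgen : ∀ g ∈ I * I, eval q (homogeneousComponent (p ^ 2) g) = 0 := by
    intro g hg
    refine Submodule.mul_induction_on hg ?_ ?_
    · intro x hx y hy
      have hxy : x * y = ∑ i ∈ Finset.range (x.totalDegree + 1),
          ∑ j ∈ Finset.range (y.totalDegree + 1),
            homogeneousComponent i x * homogeneousComponent j y := by
        conv_lhs => rw [← sum_homogeneousComponent x, ← sum_homogeneousComponent y]
        rw [Finset.sum_mul_sum]
      rw [hxy, map_sum, map_sum]
      refine Finset.sum_eq_zero fun i _ => ?_
      rw [map_sum, map_sum]
      refine Finset.sum_eq_zero fun j _ => ?_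
      rw [homogeneousComponent_of_mem ((mem_homogeneousSubmodule _ _).2
        ((homogeneousComponent_isHomogeneous i x).mul (homogeneousComponent_isHomogeneous j y)))]
      split
      case isTrue hij =>
        rw [map_mul]
        rcases le_or_gt i (N * (p - 1)) with hile | higt
        · rw [key' _ i (hIcomp x hx i) (homogeneousComponent_isHomogeneous i x) hile, zero_mul]
        · have hjle : j ≤ N * (p - 1) := by
            rw [hp2eq] at hij
            generalize hg : N * (p - 1) = DD at hij higt ⊢
            omega
          rw [key' _ j (hIcomp y hy j) (homogeneousComponent_isHomogeneous j y) hjle, mul_zero]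
      case isFalse => rw [map_zero]
    · intro x y hx hy
      rw [map_add, map_add, hx, hy, add_zero]
  have hq2 : eval q F = 0 := by
    have hD : F = homogeneousComponent (p ^ 2) F := by
      rw [homogeneousComponent_of_mem ((mem_homogeneousSubmodule _ _).2 hFhom), if_pos rfl]
    rw [hD]
    exact hgen F hF2
  rw [hevalqF] at hq2
  exact pow_ne_zero (p ^ 2) hqi hq2
end

section
/- Let K be a field of characteristic p containing F_q with q = p^s, and let I ⊆ K[x₀,x₁,x₂] be the ideal of all F_q-points of P² except q₀ = [0:1:0]. Then α(I) = q + 1, where α(I) denotes the least degree of a nonzero homogeneous element of I; in particular, no nonzero form of degree q vanishes at all the F_q-points other than q₀. -/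
open MvPolynomial

section Helpers

variable {K : Type} [Field K]

/-- degree sum of an exponent of a homogeneous polynomial in three variables -/
lemma degsum3 {f : MvPolynomial (Fin 3) K} {d : ℕ} (hf : f.IsHomogeneous d)
    {m : Fin 3 →₀ ℕ} (hm : coeff m f ≠ 0) : m 0 + m 1 + m 2 = d := by
  have h := hf hm
  rw [show (1 : Fin 3 → ℕ) = fun _ => 1 from rfl, ← Finsupp.degree_eq_weight_one] at h
  have : m.degree = ∑ i : Fin 3, m i := by
    rw [Finsupp.degree]
    apply Finset.sum_subset (Finset.subset_univ _)
    intro x _ hx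
    simpa using (Finsupp.notMem_support_iff.mp hx)
  rw [this, Fin.sum_univ_three] at h
  exact h

lemma degsum2 {B : MvPolynomial (Fin 2) K} {d : ℕ} (hB : B.IsHomogeneous d)
    {m : Fin 2 →₀ ℕ} (hm : coeff m B ≠ 0) : m 0 + m 1 = d := by
  have h := hB hm
  rw [show (1 : Fin 2 → ℕ) = fun _ => 1 from rfl, ← Finsupp.degree_eq_weight_one] at h
  have : m.degree = ∑ i : Fin 2, m i := by
    rw [Finsupp.degree]
    apply Finset.sum_subset (Finset.subset_univ _)
    intro x _ hx
    simpa using (Finsupp.notMem_support_iff.mp hx)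
  rw [this, Fin.sum_univ_two] at h
  exact h

/-- natDegree bound for substitution of polynomials of degree ≤ 1 -/
lemma natDegree_aeval_le {σ : Type} {R A : Type} [CommSemiring R] [CommSemiring A]
    [Algebra R A] (v : σ → Polynomial A) (hv : ∀ i, (v i).natDegree ≤ 1)
    (f : MvPolynomial σ R) :
    (MvPolynomial.aeval v f).natDegree ≤ f.totalDegree := by
  rw [MvPolynomial.aeval_def, MvPolynomial.eval₂_eq]
  apply Polynomial.natDegree_sum_le_of_forall_le
  intro m hm
  refine (Polynomial.natDegree_mul_le).trans ?_
  have h1 : (algebraMap R (Polynomial A) (coeff m f)).natDegree = 0 := by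
    rw [Polynomial.algebraMap_apply]
    exact Polynomial.natDegree_C _
  rw [h1, zero_add]
  refine (Polynomial.natDegree_prod_le _ _).trans ?_
  calc ∑ i ∈ m.support, (v i ^ m i).natDegree
      ≤ ∑ i ∈ m.support, m i := by
        apply Finset.sum_le_sum
        intro i _
        refine (Polynomial.natDegree_pow_le).trans ?_
        calc m i * (v i).natDegree ≤ m i * 1 := Nat.mul_le_mul_left _ (hv i)
        _ = m i := Nat.mul_one _
    _ ≤ f.totalDegree := MvPolynomial.le_totalDegree hm

/-- top coefficient of the dehomogenization of a binary form is the value at infinity -/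
lemma coeff_top_eq_eval_infty {B : MvPolynomial (Fin 2) K} {d : ℕ}
    (hB : B.IsHomogeneous d) :
    (MvPolynomial.aeval ![Polynomial.X, 1] B).coeff d = eval ![(1 : K), 0] B := by
  rw [MvPolynomial.aeval_def, MvPolynomial.eval₂_eq', MvPolynomial.eval_eq']
  rw [Polynomial.finset_sum_coeff]
  apply Finset.sum_congr rfl
  intro m hm
  have hdeg : m 0 + m 1 = d := degsum2 hB (mem_support_iff.mp hm)
  have : ∏ i : Fin 2, (![Polynomial.X, (1 : Polynomial K)] i) ^ m i
      = Polynomial.X ^ m 0 := by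
    rw [Fin.prod_univ_two]
    simp
  rw [this]
  have : ∏ i : Fin 2, (![(1 : K), 0] i) ^ m i = (0 : K) ^ m 1 := by
    rw [Fin.prod_univ_two]
    simp
  rw [this]
  have halg : algebraMap K (Polynomial K) (coeff m B) = Polynomial.C (coeff m B) := rfl
  rw [halg, Polynomial.coeff_C_mul, Polynomial.coeff_X_pow]
  rcases Nat.eq_zero_or_pos (m 1) with h1 | h1
  · rw [h1, pow_zero, mul_one]
    have : d = m 0 := by omega
    simp [this]
  · rw [zero_pow (by omega), mul_zero]
    have : d ≠ m 0 := by omega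
    simp [this]

lemma my_eval_aeval {R σ τ : Type} [CommSemiring R] (v : τ → R)
    (w : σ → MvPolynomial τ R) (f : MvPolynomial σ R) :
    eval v (MvPolynomial.aeval w f) = eval (fun i => eval v (w i)) f := by
  rw [MvPolynomial.aeval_def, MvPolynomial.eval₂_comp_left (MvPolynomial.eval v)]
  have h : (MvPolynomial.eval v).comp (algebraMap R (MvPolynomial τ R)) = RingHom.id R := by
    ext x
    simp
  rw [h]
  rfl

lemma my_polyeval_aeval {R σ : Type} [CommSemiring R] (t : R)
    (w : σ → Polynomial R) (f : MvPolynomial σ R) :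
    Polynomial.eval t (MvPolynomial.aeval w f) = eval (fun i => Polynomial.eval t (w i)) f := by
  rw [← Polynomial.coe_evalRingHom, MvPolynomial.aeval_def,
    MvPolynomial.eval₂_comp_left (Polynomial.evalRingHom t)]
  have h : (Polynomial.evalRingHom t).comp (algebraMap R (Polynomial R)) = RingHom.id R := by
    ext x
    simp
  rw [h]
  rfl

lemma my_polyeval_aeval2 {R σ : Type} [CommSemiring R] (r : Polynomial R)
    (w : σ → Polynomial (Polynomial R)) (f : MvPolynomial σ R) :
    Polynomial.eval r (MvPolynomial.aeval w f)
      = MvPolynomial.aeval (fun i => Polynomial.eval r (w i)) f := by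
  rw [← Polynomial.coe_evalRingHom, MvPolynomial.aeval_def,
    MvPolynomial.eval₂_comp_left (Polynomial.evalRingHom r), MvPolynomial.aeval_def]
  congr 1
  ext x
  simp [Polynomial.algebraMap_apply]

end Helpers

theorem stmt18 (p s : ℕ) (hp : p.Prime) (hs : 1 ≤ s)
    (K : Type) [Field K] [CharP K p] (K' : Subfield K) [Fintype K']
    (hcard : Fintype.card K' = p ^ s) :
    let q0 : Fin 3 → K := fun i => if i = 1 then 1 else 0
    let S : Set (Fin 3 → K) :=
      {π | π ≠ 0 ∧ (∀ i, π i ∈ K') ∧ ¬∃ c : K, π = c • q0}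
    let I : Ideal (MvPolynomial (Fin 3) K) := ⨅ π ∈ S, pointIdeal π
    -- α(I) = q + 1
    IsLeast {d | ∃ f ∈ I, f ≠ 0 ∧ f.IsHomogeneous d} (p ^ s + 1) := by
  intro q0 S I
  set q : ℕ := p ^ s with hqdef
  have hq2 : 2 ≤ q := by
    calc 2 ≤ p := hp.two_le
    _ = p ^ 1 := (pow_one p).symm
    _ ≤ p ^ s := Nat.pow_le_pow_right hp.pos hs
  -- every element of K' satisfies x ^ q = x
  have hpow : ∀ x : K, x ∈ K' → x ^ q = x := by
    intro x hx
    have h := FiniteField.pow_card (⟨x, hx⟩ : K')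
    rw [hcard] at h
    have := congrArg (Subtype.val) h
    push_cast at this
    exact this
  -- membership of points in S
  have hmemS : ∀ x y z : K, x ∈ K' → y ∈ K' → z ∈ K' → (x ≠ 0 ∨ z ≠ 0) →
      (![x, y, z] : Fin 3 → K) ∈ S := by
    intro x y z hx hy hz hxz
    refine ⟨?_, ?_, ?_⟩
    · intro h
      rcases hxz with h0 | h0
      · exact h0 (by simpa using congrFun h 0)
      · exact h0 (by simpa using congrFun h 2)
    · intro i
      fin_cases i <;> simpa
    · rintro ⟨c, hc⟩
      have h0 := congrFun hc 0
      have h2 := congrFun hc 2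
      simp only [Matrix.cons_val_zero, Pi.smul_apply, smul_eq_mul] at h0
      simp only [Pi.smul_apply, smul_eq_mul] at h2
      have hq00 : q0 0 = 0 := by simp [q0]
      have hq02 : q0 2 = 0 := by simp [q0]
      rw [hq00, mul_zero] at h0
      rw [hq02, mul_zero] at h2
      simp only [Matrix.cons_val_two] at h2
      rcases hxz with h' | h'
      · exact h' h0
      · exact h' (by simpa using h2)
  constructor
  · -- q + 1 is achieved by X0 * X2^q - X2 * X0^q
    refine ⟨X 0 * X 2 ^ q - X 2 * X 0 ^ q, ?_, ?_, ?_⟩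
    · rw [Ideal.mem_iInf]
      intro π
      rw [Ideal.mem_iInf]
      intro hπ
      apply Ideal.subset_span
      constructor
      · refine ⟨q + 1, ?_⟩
        have h1 : (X 0 * X 2 ^ q : MvPolynomial (Fin 3) K).IsHomogeneous (q + 1) := by
          have := (isHomogeneous_X K (0 : Fin 3)).mul ((isHomogeneous_X K (2 : Fin 3)).pow q)
          simpa [Nat.add_comm] using this
        have h2 : (X 2 * X 0 ^ q : MvPolynomial (Fin 3) K).IsHomogeneous (q + 1) := by
          have := (isHomogeneous_X K (2 : Fin 3)).mul ((isHomogeneous_X K (0 : Fin 3)).pow q)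
          simpa [Nat.add_comm] using this
        exact h1.sub h2
      · have h0 := hpow (π 0) (hπ.2.1 0)
        have h2 := hpow (π 2) (hπ.2.1 2)
        simp only [Set.mem_setOf_eq, map_sub, map_mul, map_pow, eval_X]
        rw [h0, h2]
        ring
    · -- nonzero
      apply sub_ne_zero.mpr
      have e1 : (X 0 * X 2 ^ q : MvPolynomial (Fin 3) K)
          = monomial (Finsupp.single 0 1 + Finsupp.single 2 q) 1 := by
        rw [X_pow_eq_monomial, X, monomial_mul, one_mul]
      have e2 : (X 2 * X 0 ^ q : MvPolynomial (Fin 3) K)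
          = monomial (Finsupp.single 2 1 + Finsupp.single 0 q) 1 := by
        rw [X_pow_eq_monomial, X, monomial_mul, one_mul]
      rw [e1, e2]
      intro hh
      rcases (MvPolynomial.monomial_eq_monomial_iff _ _ _ _).mp hh with ⟨hs, -⟩ | ⟨h1, -⟩
      · have h0 := DFunLike.congr_fun hs (0 : Fin 3)
        rw [Finsupp.add_apply, Finsupp.add_apply,
          Finsupp.single_eq_same, Finsupp.single_eq_of_ne' (show (2 : Fin 3) ≠ 0 by decide),
          Finsupp.single_eq_of_ne' (show (2 : Fin 3) ≠ 0 by decide), Finsupp.single_eq_same] at h0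
        omega
      · exact one_ne_zero h1
    · refine ?_
      have h1 : (X 0 * X 2 ^ q : MvPolynomial (Fin 3) K).IsHomogeneous (q + 1) := by
        have := (isHomogeneous_X K (0 : Fin 3)).mul ((isHomogeneous_X K (2 : Fin 3)).pow q)
        simpa [Nat.add_comm] using this
      have h2 : (X 2 * X 0 ^ q : MvPolynomial (Fin 3) K).IsHomogeneous (q + 1) := by
        have := (isHomogeneous_X K (2 : Fin 3)).mul ((isHomogeneous_X K (0 : Fin 3)).pow q)
        simpa [Nat.add_comm] using this
      exact h1.sub h2
  · -- lower bound
    rintro d ⟨f, hfI, hf0, hfhom⟩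
    by_contra hlt
    push_neg at hlt
    have hd : d ≤ q := by omega
    -- f vanishes at all relevant points
    have hvan : ∀ x y z : K, x ∈ K' → y ∈ K' → z ∈ K' → (x ≠ 0 ∨ z ≠ 0) →
        eval ![x, y, z] f = 0 := by
      intro x y z hx hy hz hxz
      have hπS : (![x, y, z] : Fin 3 → K) ∈ S := hmemS x y z hx hy hz hxz
      have hf' : f ∈ pointIdeal ![x, y, z] := by
        have := Ideal.mem_iInf.mp hfI ![x, y, z]
        exact Ideal.mem_iInf.mp this hπS
      have hker : pointIdeal ![x, y, z] ≤ RingHom.ker (eval ![x, y, z]) := by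
        rw [pointIdeal, Ideal.span_le]
        intro g hg
        exact hg.2
      exact hker hf'
    -- Step A : for a, c ∈ K', f(T, aT + c, 1) = 0 as a polynomial in K[T]
    have stepA : ∀ a c : K, a ∈ K' → c ∈ K' →
        (MvPolynomial.aeval
          ![Polynomial.X, Polynomial.C a * Polynomial.X + Polynomial.C c, 1] f
            : Polynomial K) = 0 := by
      intro a c ha hc
      set w : Fin 3 → MvPolynomial (Fin 2) K :=
        ![X 0, MvPolynomial.C a * X 0 + MvPolynomial.C c * X 1, X 1] with hw
      set B : MvPolynomial (Fin 2) K := MvPolynomial.aeval w f with hBdef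
      have hB : B.IsHomogeneous d := by
        have hw1 : ∀ i, (w i).IsHomogeneous 1 := by
          intro i
          fin_cases i
          · exact isHomogeneous_X K 0
          · exact ((isHomogeneous_X K 0).C_mul a).add ((isHomogeneous_X K 1).C_mul c)
          · exact isHomogeneous_X K 1
        have := hfhom.aeval w hw1
        rwa [one_mul] at this
      set down : Polynomial K := MvPolynomial.aeval ![Polynomial.X, 1] B with hdowndef
      have hdown_eq : down =
          MvPolynomial.aeval
            ![Polynomial.X, Polynomial.C a * Polynomial.X + Polynomial.C c, 1] f := by
        have harg : (fun i => (MvPolynomial.aeval (R := K)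
            ![Polynomial.X, (1 : Polynomial K)]) (w i))
            = ![Polynomial.X, Polynomial.C a * Polynomial.X + Polynomial.C c, 1] := by
          funext i
          fin_cases i <;> simp [hw]
        rw [hdowndef, hBdef, MvPolynomial.comp_aeval_apply, harg]
      -- down vanishes
      have hdown0 : down = 0 := by
        by_contra hne
        have hdeg_le : down.natDegree ≤ d := by
          refine le_trans (natDegree_aeval_le _ ?_ B) hB.totalDegree_le
          intro i
          fin_cases i
          · simp
          · simp
        have hcoeffd : down.coeff d = 0 := by
          rw [hdowndef, coeff_top_eq_eval_infty hB]
          have : eval ![(1 : K), 0] B = eval ![(1 : K), a, 0] f := by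
            have harg : (fun i => eval ![(1 : K), (0 : K)] (w i)) = ![(1 : K), a, 0] := by
              funext i
              fin_cases i <;> simp [hw]
            rw [hBdef, my_eval_aeval, harg]
          rw [this]
          exact hvan 1 a 0 (one_mem K') ha (zero_mem K') (Or.inl one_ne_zero)
        have hdeg_lt : down.natDegree < d := by
          rcases lt_or_eq_of_le hdeg_le with h | h
          · exact h
          · exfalso
            apply hne
            rw [← Polynomial.leadingCoeff_eq_zero, Polynomial.leadingCoeff, h]
            exact hcoeffd
        apply hne
        apply Polynomial.eq_zero_of_natDegree_lt_card_of_eval_eq_zero down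
          (f := fun t : K' => (t : K)) Subtype.val_injective
        · intro t
          have : Polynomial.eval (t : K) down = eval ![(t : K), a * t + c, 1] f := by
            have harg : (fun i => Polynomial.eval (t : K)
                (![Polynomial.X, Polynomial.C a * Polynomial.X + Polynomial.C c, 1] i))
                = ![(t : K), a * t + c, 1] := by
              funext i
              fin_cases i <;> simp
            rw [hdown_eq, my_polyeval_aeval, harg]
          rw [this]
          exact hvan t (a * t + c) 1 t.2 (add_mem (mul_mem ha t.2) hc) (one_mem K')
            (Or.inr one_ne_zero)
        · rw [hcard]
          omega
      rw [← hdown_eq, hdown0]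
    -- Step B : f(X, Y, 1) = 0 in K[X][Y]
    have stepB : (MvPolynomial.aeval
        ![Polynomial.C Polynomial.X, Polynomial.X, 1] f
          : Polynomial (Polynomial K)) = 0 := by
      set u : Fin 3 → Polynomial (Polynomial K) :=
        ![Polynomial.C Polynomial.X, Polynomial.X, 1] with hu
      set P : Polynomial (Polynomial K) := MvPolynomial.aeval u f with hPdef
      have hdeg_le : P.natDegree ≤ d := by
        refine le_trans (natDegree_aeval_le _ ?_ f) hfhom.totalDegree_le
        intro i
        fin_cases i
        · simp [hu]
        · simp [hu]
        · simp [hu]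
      apply Polynomial.eq_zero_of_natDegree_lt_card_of_eval_eq_zero P
        (f := fun ac : K' × K' =>
          (Polynomial.C (ac.1 : K) * Polynomial.X + Polynomial.C (ac.2 : K) : Polynomial K))
        ?_ ?_ ?_
      · -- injective
        intro x y hxy
        have h1 := congrArg (fun g => Polynomial.coeff g 1) hxy
        have h0 := congrArg (fun g => Polynomial.coeff g 0) hxy
        simp only [Polynomial.coeff_add, Polynomial.coeff_C_mul, Polynomial.coeff_X_one,
          Polynomial.coeff_C, Polynomial.coeff_X_zero, mul_one, mul_zero] at h1 h0
        norm_num at h1 h0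
        exact Prod.ext h1 h0
      · -- roots
        rintro ⟨a, c⟩
        have key := stepA a c a.2 c.2
        have : Polynomial.eval (Polynomial.C (a : K) * Polynomial.X + Polynomial.C (c : K)) P
            = MvPolynomial.aeval
              ![Polynomial.X, Polynomial.C (a : K) * Polynomial.X + Polynomial.C (c : K), 1] f := by
          have harg : (fun i => Polynomial.eval
              (Polynomial.C (a : K) * Polynomial.X + Polynomial.C (c : K)) (u i))
              = ![Polynomial.X, Polynomial.C (a : K) * Polynomial.X + Polynomial.C (c : K), 1] := by
            funext i
            fin_cases i <;> simp [hu]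
          rw [hPdef, my_polyeval_aeval2, harg]
        rw [this]
        exact key
      · -- card
        rw [Fintype.card_prod, hcard]
        calc P.natDegree < q + 1 := by omega
        _ ≤ q * q := by nlinarith
    -- Step C : conclude f = 0, contradiction
    apply hf0
    ext m
    rw [coeff_zero]
    by_cases hm : coeff m f = 0
    · exact hm
    exfalso
    apply hm
    have hsum : m 0 + m 1 + m 2 = d := degsum3 hfhom hm
    -- coeff m f equals an iterated coefficient of P = 0
    have key : ((MvPolynomial.aeval
        ![Polynomial.C Polynomial.X, Polynomial.X, 1] f
          : Polynomial (Polynomial K)).coeff (m 1)).coeff (m 0) = coeff m f := by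
      rw [MvPolynomial.aeval_def, MvPolynomial.eval₂_eq']
      rw [Polynomial.finset_sum_coeff, Polynomial.finset_sum_coeff]
      rw [Finset.sum_eq_single_of_mem m (mem_support_iff.mpr hm)]
      · have : (algebraMap K (Polynomial (Polynomial K))) (coeff m f)
            = Polynomial.C (Polynomial.C (coeff m f)) := by
          simp [Polynomial.algebraMap_apply]
        rw [this, Fin.prod_univ_three]
        simp only [Matrix.cons_val_zero, Matrix.cons_val_one, Matrix.head_cons,
          Matrix.cons_val_two, Matrix.tail_cons, one_pow, mul_one]
        rw [← Polynomial.C_pow, ← mul_assoc, ← Polynomial.C_mul, Polynomial.coeff_C_mul,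
          Polynomial.coeff_X_pow, if_pos rfl, mul_one, Polynomial.coeff_C_mul,
          Polynomial.coeff_X_pow, if_pos rfl, mul_one]
      · intro m' hm' hne
        have hm'0 : coeff m' f ≠ 0 := mem_support_iff.mp hm'
        have hsum' : m' 0 + m' 1 + m' 2 = d := degsum3 hfhom hm'0
        have : (algebraMap K (Polynomial (Polynomial K))) (coeff m' f)
            = Polynomial.C (Polynomial.C (coeff m' f)) := by
          simp [Polynomial.algebraMap_apply]
        rw [this, Fin.prod_univ_three]
        simp only [Matrix.cons_val_zero, Matrix.cons_val_one, Matrix.head_cons,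
          Matrix.cons_val_two, Matrix.tail_cons, one_pow, mul_one]
        rw [← Polynomial.C_pow, ← mul_assoc, ← Polynomial.C_mul, Polynomial.coeff_C_mul,
          Polynomial.coeff_X_pow]
        by_cases h1 : m 1 = m' 1
        · rw [if_pos h1, mul_one, Polynomial.coeff_C_mul, Polynomial.coeff_X_pow]
          by_cases h0 : m 0 = m' 0
          · exfalso
            apply hne
            have h2 : m' 2 = m 2 := by omega
            ext i
            fin_cases i
            · exact h0.symm
            · exact h1.symm
            · exact h2
          · rw [if_neg h0]
            simp
        · rw [if_neg h1]
          simp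
    rw [← key, stepB]
    simp
end

section
/- Let K be a field of characteristic p > 0 with prime field K', N ≤ p, and let π be a point of P^N(K') with exactly t zero coordinates, where 0 ≤ t < N and p - N + t ≥ 0. Let Q_{p-1} be the degree-(p-1) homogeneous component of ∏_{i=0}^{N}(x_i+1)^{p-1}. Then Q_{p-1}(x₀^{p-1}, …, x_N^{p-1}) lies in I_π^{p-N+t}, where I_π is the ideal of π in K[x₀,…,x_N]. -/
open MvPolynomial
open Finset


lemma hockey (s n : ℕ) : ∑ k ∈ range n, k.choose s = n.choose (s+1) := by
  induction n with
  | zero => simp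
  | succ n ih => rw [sum_range_succ, ih, Nat.choose_succ_succ' n s, Nat.add_comm]

lemma vand (s c M : ℕ) : ∑ k ∈ range (M+1), k.choose s * (M-k).choose c
    = (M+1).choose (s+c+1) := by
  induction s generalizing c M with
  | zero =>
    simp only [Nat.choose_zero_right, one_mul, Nat.zero_add]
    rw [← Finset.sum_range_reflect]
    rw [Finset.sum_congr rfl (fun j hj => ?_), hockey]
    simp only [mem_range] at hj
    congr 1
    omega
  | succ s ih =>
    have h1 : ∀ k ∈ range (M+1), k.choose (s+1) * (M-k).choose c
        = ∑ l ∈ range (M+1), if l < k then l.choose s * (M-k).choose c else 0 := by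
      intro k hk
      simp only [mem_range] at hk
      rw [Finset.sum_ite, Finset.sum_const_zero, add_zero, ← Finset.sum_mul]
      have hf : Finset.filter (fun l => l < k) (range (M+1)) = range k := by
        ext l; simp only [mem_filter, mem_range]; omega
      rw [hf, hockey]
    rw [Finset.sum_congr rfl h1, Finset.sum_comm]
    have h2 : ∀ l ∈ range (M+1),
        (∑ k ∈ range (M+1), if l < k then l.choose s * (M-k).choose c else 0)
        = l.choose s * (M-l).choose (c+1) := by
      intro l hl
      simp only [mem_range] at hl
      rw [Finset.sum_ite, Finset.sum_const_zero, add_zero, ← Finset.mul_sum]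
      have hf : Finset.filter (fun k => l < k) (range (M+1)) = Ico (l+1) (M+1) := by
        ext k; simp only [mem_filter, mem_range, mem_Ico]; omega
      rw [hf, Finset.sum_Ico_eq_sum_range]
      have he : M + 1 - (l+1) = M - l := by omega
      rw [he]
      have h3 : ∀ j ∈ range (M-l), (M - (l+1+j)).choose c = (M - l - 1 - j).choose c := by
        intro j hj; congr 1; omega
      rw [Finset.sum_congr rfl h3, Finset.sum_range_reflect (fun j => j.choose c) (M-l), hockey]
    rw [Finset.sum_congr rfl h2, ih]
    congr 1
    omega

lemma vand' (s c M : ℕ) :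
    ∑ k ∈ range (M+1), k.choose s * (M+1-k).choose (c+1) = (M+2).choose (s+c+2) := by
  have h := vand s (c+1) (M+1)
  rw [Finset.sum_range_succ] at h
  simp only [Nat.sub_self, Nat.choose_zero_succ, Nat.choose_succ_self] at h
  rw [mul_zero, add_zero] at h
  calc ∑ k ∈ range (M+1), k.choose s * (M+1-k).choose (c+1)
      = (M+1+1).choose (s+(c+1)+1) := h
    _ = (M+2).choose (s+c+2) := by congr 1

lemma vand'' (s c n : ℕ) (hn : 1 ≤ n) :
    ∑ k ∈ range n, k.choose s * (n-k).choose (c+1)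
      = n.choose (s+c+1) + n.choose (s+c+2) := by
  obtain ⟨M, rfl⟩ : ∃ M, n = M + 1 := ⟨n - 1, by omega⟩
  rw [vand' s c M, Nat.choose_succ_succ (M+1) (s+c+1)]

section Arith
variable {ι : Type*} [Fintype ι] [DecidableEq ι] (p : ℕ)

def Dom (T : Finset ι) : Finset (ι → ℕ) :=
  (Fintype.piFinset fun _ => range p).filter
    (fun a => (∑ i, a i ≤ p - 1) ∧ ∀ i ∉ T, a i = 0)

lemma mem_Dom {T : Finset ι} {a : ι → ℕ} :
    a ∈ Dom p T ↔ (∀ i, a i < p) ∧ (∑ i, a i ≤ p - 1) ∧ ∀ i ∉ T, a i = 0 := by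
  simp [Dom, Fintype.mem_piFinset]

lemma sum_update_zero (a : ι → ℕ) (j : ι) (k : ℕ) (haj : a j = 0) :
    ∑ i, Function.update a j k i = k + ∑ i, a i := by
  rw [Finset.sum_update_of_mem (mem_univ j)]
  congr 1
  rw [Finset.sum_eq_sum_sdiff_singleton_add (mem_univ j) a, haj, add_zero]

lemma prod_choose_update (a β : ι → ℕ) (j : ι) (k : ℕ) :
    ∏ i, (Function.update a j k i).choose (β i)
      = k.choose (β j) * ∏ i, (a i).choose (Function.update β j 0 i) := by
  rw [← Finset.mul_prod_erase univ (fun i => (Function.update a j k i).choose (β i)) (mem_univ j),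
      ← Finset.mul_prod_erase univ (fun i => (a i).choose (Function.update β j 0 i)) (mem_univ j)]
  rw [Function.update_self, Function.update_self, Nat.choose_zero_right, one_mul]
  congr 1
  apply Finset.prod_congr rfl
  intro i hi
  rw [Function.update_of_ne (Finset.mem_erase.mp hi).1, Function.update_of_ne (Finset.mem_erase.mp hi).1]
end Arith

section Arith2
variable {ι : Type*} [Fintype ι] [DecidableEq ι] (p : ℕ)

lemma peel (hp : 0 < p) (T : Finset ι) (j : ι) (hj : j ∉ T) {M : Type*} [AddCommMonoid M]
    (f : (ι → ℕ) → M) :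
    ∑ a ∈ Dom p (insert j T), f a
      = ∑ a ∈ Dom p T, ∑ k ∈ range (p - ∑ i, a i), f (Function.update a j k) := by
  rw [← Finset.sum_sigma (Dom p T) (fun a => range (p - ∑ i, a i))
      (fun x => f (Function.update x.1 j x.2))]
  apply Finset.sum_bij' (i := fun a (_ : a ∈ Dom p (insert j T)) =>
      (⟨Function.update a j 0, a j⟩ : Σ _ : ι → ℕ, ℕ))
    (j := fun x _ => Function.update x.1 j x.2)
  · -- hi : maps into sigma
    intro a ha
    rw [mem_Dom] at ha
    obtain ⟨h1, h2, h3⟩ := ha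
    have hsum : ∑ i, Function.update a j 0 i + a j = ∑ i, a i := by
      rw [Finset.sum_update_of_mem (mem_univ j), zero_add,
        Finset.sum_eq_sum_sdiff_singleton_add (mem_univ j) a]
    rw [Finset.mem_sigma, mem_Dom, mem_range]
    dsimp only
    refine ⟨⟨fun i => ?_, by omega, fun i hi => ?_⟩, by have := h1 j; omega⟩
    · by_cases hij : i = j
      · subst hij; simp [hp]
      · rw [Function.update_of_ne hij]; exact h1 i
    · by_cases hij : i = j
      · subst hij; simp
      · rw [Function.update_of_ne hij]; exact h3 i (by simp [hij, hi])
  · -- hj : maps back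
    intro x hx
    rw [Finset.mem_sigma, mem_Dom, mem_range] at hx
    obtain ⟨⟨h1, h2, h3⟩, h4⟩ := hx
    have haj : x.1 j = 0 := h3 j hj
    rw [mem_Dom]
    rw [sum_update_zero _ _ _ haj]
    refine ⟨fun i => ?_, by omega, fun i hi => ?_⟩
    · by_cases hij : i = j
      · subst hij; rw [Function.update_self]; omega
      · rw [Function.update_of_ne hij]; exact h1 i
    · simp only [Finset.mem_insert, not_or] at hi
      rw [Function.update_of_ne hi.1]
      exact h3 i hi.2
  · -- left inverse
    intro a ha
    dsimp only
    funext i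
    by_cases hij : i = j
    · subst hij; simp
    · simp [Function.update_of_ne hij]
  · -- right inverse
    intro x hx
    obtain ⟨x1, x2⟩ := x
    rw [Finset.mem_sigma, mem_Dom] at hx
    have haj : x1 j = 0 := hx.1.2.2 j hj
    have h5 : Function.update (Function.update x1 j x2) j 0 = x1 := by
      funext i
      by_cases hij : i = j
      · subst hij; simp [haj]
      · simp [Function.update_of_ne hij]
    have h6 : Function.update x1 j x2 j = x2 := Function.update_self j x2 x1
    simp only [h5, h6]
  · -- summand equality
    intro a ha
    dsimp only
    congr 1
    funext i
    by_cases hij : i = j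
    · subst hij; simp
    · simp [Function.update_of_ne hij]

end Arith2

section Arith3
variable {ι : Type*} [Fintype ι] [DecidableEq ι] {p : ℕ}

lemma sum_update_zero' (β : ι → ℕ) (j : ι) :
    ∑ i, Function.update β j 0 i + β j = ∑ i, β i := by
  rw [Finset.sum_update_of_mem (mem_univ j), zero_add,
    Finset.sum_eq_sum_sdiff_singleton_add (mem_univ j) β]

lemma lemA (hp : p.Prime) (T : Finset ι) (r : ℕ) (β : ι → ℕ) (hβ : ∀ i ∉ T, β i = 0)
    (h : T.card + r + ∑ i, β i ≤ p - 2) :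
    p ∣ ∑ a ∈ Dom p T, (p - ∑ i, a i).choose (r+1) * ∏ i, (a i).choose (β i) := by
  induction T using Finset.induction_on generalizing r β with
  | empty =>
    have hD : Dom p (∅ : Finset ι) = ({fun _ => 0} : Finset (ι → ℕ)) := by
      ext a
      rw [mem_Dom, Finset.mem_singleton]
      constructor
      · intro ⟨h1, h2, h3⟩
        funext i
        exact h3 i (Finset.notMem_empty i)
      · intro ha
        subst ha
        refine ⟨fun i => hp.pos, by simp, fun i _ => rfl⟩
    rw [hD, Finset.sum_singleton]
    have hprod : ∏ i, ((fun _ => (0:ℕ)) i).choose (β i) = 1 := by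
      apply Finset.prod_eq_one
      intro i _
      simp [hβ i (Finset.notMem_empty i)]
    rw [hprod, mul_one]
    simp only [Finset.sum_const_zero, Nat.sub_zero]
    have h2 := hp.two_le
    simp only [Finset.card_empty] at h
    exact hp.dvd_choose_self (Nat.succ_ne_zero r) (by omega)
  | @insert j T hj ih =>
    rw [peel p hp.pos T j hj]
    have h2 := hp.two_le
    have hcard : (insert j T).card = T.card + 1 := Finset.card_insert_of_notMem hj
    have hβs := sum_update_zero' β j
    have hstep : ∀ a ∈ Dom p T,
        (∑ k ∈ range (p - ∑ i, a i), (p - ∑ i, Function.update a j k i).choose (r+1)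
          * ∏ i, (Function.update a j k i).choose (β i))
        = (p - ∑ i, a i).choose ((β j + r + 1) + 1) * ∏ i, (a i).choose (Function.update β j 0 i)
          + (p - ∑ i, a i).choose ((β j + r) + 1) * ∏ i, (a i).choose (Function.update β j 0 i) := by
      intro a ha
      rw [mem_Dom] at ha
      obtain ⟨ha1, ha2, ha3⟩ := ha
      have haj : a j = 0 := ha3 j hj
      have hterm : ∀ k ∈ range (p - ∑ i, a i),
          (p - ∑ i, Function.update a j k i).choose (r+1)
            * ∏ i, (Function.update a j k i).choose (β i)
          = (k.choose (β j) * ((p - ∑ i, a i) - k).choose (r+1))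
            * ∏ i, (a i).choose (Function.update β j 0 i) := by
        intro k hk
        rw [sum_update_zero a j k haj, prod_choose_update a β j k]
        have hc : p - (k + ∑ i, a i) = (p - ∑ i, a i) - k := by omega
        rw [hc]
        ring
      rw [Finset.sum_congr rfl hterm, ← Finset.sum_mul,
        vand'' (β j) r (p - ∑ i, a i) (by omega), add_mul]
      have e1 : β j + r + 1 + 1 = β j + r + 2 := by omega
      rw [e1]
      ring
    rw [Finset.sum_congr rfl hstep, Finset.sum_add_distrib]
    have hβ' : ∀ i ∉ T, Function.update β j 0 i = 0 := by
      intro i hi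
      by_cases hij : i = j
      · subst hij; simp
      · rw [Function.update_of_ne hij]
        exact hβ i (by simp [hij, hi])
    refine dvd_add (ih (β j + r + 1) _ hβ' (by omega)) (ih (β j + r) _ hβ' (by omega))

lemma lemB (hp : p.Prime) (T : Finset ι) (hT : T.Nonempty) (β : ι → ℕ)
    (hβ : ∀ i ∉ T, β i = 0) (h : T.card + ∑ i, β i ≤ p - 1) :
    p ∣ ∑ a ∈ Dom p T, ∏ i, (a i).choose (β i) := by
  obtain ⟨j, hjT⟩ := hT
  have h2 := hp.two_le
  have hcard : 1 ≤ T.card := Finset.card_pos.mpr ⟨j, hjT⟩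
  have hcard' : (T.erase j).card = T.card - 1 := Finset.card_erase_of_mem hjT
  have hβs := sum_update_zero' β j
  have hrec : T = insert j (T.erase j) := (Finset.insert_erase hjT).symm
  rw [hrec, peel p hp.pos _ j (Finset.notMem_erase j T)]
  have hstep : ∀ a ∈ Dom p (T.erase j),
      (∑ k ∈ range (p - ∑ i, a i), ∏ i, (Function.update a j k i).choose (β i))
      = (p - ∑ i, a i).choose (β j + 1) * ∏ i, (a i).choose (Function.update β j 0 i) := by
    intro a ha
    rw [mem_Dom] at ha
    have hterm : ∀ k ∈ range (p - ∑ i, a i),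
        ∏ i, (Function.update a j k i).choose (β i)
        = k.choose (β j) * ∏ i, (a i).choose (Function.update β j 0 i) :=
      fun k _ => prod_choose_update a β j k
    rw [Finset.sum_congr rfl hterm, ← Finset.sum_mul, hockey]
  rw [Finset.sum_congr rfl hstep]
  have hβ' : ∀ i ∉ T.erase j, Function.update β j 0 i = 0 := by
    intro i hi
    by_cases hij : i = j
    · subst hij; simp
    · rw [Function.update_of_ne hij]
      refine hβ i ?_
      intro hiT
      exact hi (Finset.mem_erase.mpr ⟨hij, hiT⟩)
  exact lemA hp (T.erase j) (β j) _ hβ' (by omega)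
end Arith3

section Arith4
variable {ι : Type*} [Fintype ι] [DecidableEq ι] (p : ℕ)

def DomE (T : Finset ι) : Finset (ι → ℕ) :=
  (Fintype.piFinset fun _ => range p).filter
    (fun a => (∑ i, a i = p - 1) ∧ ∀ i ∉ T, a i = 0)

lemma mem_DomE {T : Finset ι} {a : ι → ℕ} :
    a ∈ DomE p T ↔ (∀ i, a i < p) ∧ (∑ i, a i = p - 1) ∧ ∀ i ∉ T, a i = 0 := by
  simp [DomE, Fintype.mem_piFinset]

lemma peelTop (hp : 0 < p) (T : Finset ι) (j : ι) (hj : j ∉ T) {M : Type*} [AddCommMonoid M]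
    (f : (ι → ℕ) → M) :
    ∑ a ∈ DomE p (insert j T), f a
      = ∑ a ∈ Dom p T, f (Function.update a j (p - 1 - ∑ i, a i)) := by
  apply Finset.sum_bij' (i := fun a (_ : a ∈ DomE p (insert j T)) => Function.update a j 0)
    (j := fun a _ => Function.update a j (p - 1 - ∑ i, a i))
  · intro a ha
    rw [mem_DomE] at ha
    obtain ⟨h1, h2, h3⟩ := ha
    have hsum : ∑ i, Function.update a j 0 i + a j = ∑ i, a i := by
      rw [Finset.sum_update_of_mem (mem_univ j), zero_add,
        Finset.sum_eq_sum_sdiff_singleton_add (mem_univ j) a]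
    rw [mem_Dom]
    refine ⟨fun i => ?_, by omega, fun i hi => ?_⟩
    · by_cases hij : i = j
      · subst hij; simp [hp]
      · rw [Function.update_of_ne hij]; exact h1 i
    · by_cases hij : i = j
      · subst hij; simp
      · rw [Function.update_of_ne hij]; exact h3 i (by simp [hij, hi])
  · intro a ha
    rw [mem_Dom] at ha
    obtain ⟨h1, h2, h3⟩ := ha
    have haj : a j = 0 := h3 j hj
    rw [mem_DomE, sum_update_zero a j _ haj]
    refine ⟨fun i => ?_, by omega, fun i hi => ?_⟩
    · by_cases hij : i = j
      · subst hij; rw [Function.update_self]; omega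
      · rw [Function.update_of_ne hij]; exact h1 i
    · simp only [Finset.mem_insert, not_or] at hi
      rw [Function.update_of_ne hi.1]
      exact h3 i hi.2
  · intro a ha
    rw [mem_DomE] at ha
    obtain ⟨h1, h2, h3⟩ := ha
    have hsum : ∑ i, Function.update a j 0 i + a j = ∑ i, a i := by
      rw [Finset.sum_update_of_mem (mem_univ j), zero_add,
        Finset.sum_eq_sum_sdiff_singleton_add (mem_univ j) a]
    have hv : p - 1 - ∑ i, Function.update a j 0 i = a j := by omega
    rw [hv]
    funext i
    by_cases hij : i = j
    · subst hij; simp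
    · simp [Function.update_of_ne hij]
  · intro a ha
    rw [mem_Dom] at ha
    have haj : a j = 0 := ha.2.2 j hj
    funext i
    by_cases hij : i = j
    · subst hij; simp [haj]
    · simp [Function.update_of_ne hij]
  · intro a ha
    rw [mem_DomE] at ha
    obtain ⟨h1, h2, h3⟩ := ha
    have hsum : ∑ i, Function.update a j 0 i + a j = ∑ i, a i := by
      rw [Finset.sum_update_of_mem (mem_univ j), zero_add,
        Finset.sum_eq_sum_sdiff_singleton_add (mem_univ j) a]
    have hv : p - 1 - ∑ i, Function.update a j 0 i = a j := by omega
    rw [hv]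
    congr 1
    funext i
    by_cases hij : i = j
    · subst hij; simp
    · simp [Function.update_of_ne hij]
end Arith4

lemma lemKey {ι : Type*} [Fintype ι] [DecidableEq ι] {p : ℕ} (hp : p.Prime)
    (T : Finset ι) (j : ι) (hj : j ∉ T) (hT : T.Nonempty) (b : ι → ℕ)
    (hb : ∀ i ∉ T, b i = 0) (hcond : T.card + ∑ i, b i ≤ p - 1) :
    p ∣ ∑ a ∈ DomE p (insert j T), ∏ i, (a i).choose (b i) := by
  rw [peelTop p hp.pos T j hj]
  have hbj : b j = 0 := hb j hj
  have hstep : ∀ a ∈ Dom p T,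
      ∏ i, (Function.update a j (p - 1 - ∑ i, a i) i).choose (b i)
        = ∏ i, (a i).choose (b i) := by
    intro a _
    rw [prod_choose_update a b j _, hbj, Nat.choose_zero_right, one_mul]
    congr 1
    rw [← hbj, Function.update_eq_self]
  rw [Finset.sum_congr rfl hstep]
  exact lemB hp T hT b hb hcond


section PolyLemmas
variable {K : Type} [Field K] {n : ℕ}

local notation "R" => MvPolynomial (Fin n) K

lemma coeff_aeval_mem (J : Ideal (MvPolynomial (Fin n) K))
    (g : Fin n → Polynomial (MvPolynomial (Fin n) K))
    (hg : ∀ i k, (g i).coeff k ∈ J ^ k) (f : MvPolynomial (Fin n) K) (k : ℕ) :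
    ((aeval g f : Polynomial (MvPolynomial (Fin n) K)).coeff k) ∈ J ^ k := by
  induction f using MvPolynomial.induction_on generalizing k with
  | C a =>
    rw [aeval_C, Polynomial.algebraMap_apply, Polynomial.coeff_C]
    split_ifs with h
    · subst h; rw [pow_zero, Ideal.one_eq_top]; exact Submodule.mem_top
    · exact zero_mem _
  | add f₁ f₂ ih₁ ih₂ =>
    rw [map_add, Polynomial.coeff_add]
    exact add_mem (ih₁ k) (ih₂ k)
  | mul_X f i ih =>
    rw [map_mul, aeval_X, Polynomial.coeff_mul]
    apply Ideal.sum_mem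
    intro x hx
    rw [Finset.HasAntidiagonal.mem_antidiagonal] at hx
    rw [← hx, pow_add]
    exact Ideal.mul_mem_mul (ih x.1) (hg i x.2)

lemma eval_one_mem (J : Ideal (MvPolynomial (Fin n) K))
    (P : Polynomial (MvPolynomial (Fin n) K)) (m : ℕ)
    (h1 : ∀ k, P.coeff k ∈ J ^ k) (h2 : ∀ k < m, P.coeff k = 0) :
    Polynomial.eval 1 P ∈ J ^ m := by
  rw [Polynomial.eval_eq_sum_range]
  apply Ideal.sum_mem
  intro k _
  rw [one_pow, mul_one]
  by_cases hkm : k < m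
  · rw [h2 k hkm]; exact zero_mem _
  · exact Ideal.pow_le_pow_right (le_of_not_gt hkm) (h1 k)

lemma coeff_term (e k : ℕ) (u : MvPolynomial (Fin n) K) (c : ℕ) :
    (Polynomial.X ^ e * Polynomial.C u * (c : Polynomial (MvPolynomial (Fin n) K))).coeff k
      = if e = k then u * c else 0 := by
  rw [← Polynomial.C_eq_natCast, Polynomial.coeff_mul_C, Polynomial.coeff_X_pow_mul',
    Polynomial.coeff_C]
  split_ifs with h1 h2 h3 h3 <;> first
    | rfl
    | (try simp) <;> omega
end PolyLemmas


lemma chooseNeg {K : Type} [Field K] {p : ℕ} (hp : p.Prime) [CharP K p] :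
    ∀ k, k ≤ p - 1 → (((p-1).choose k : K)) = (-1)^k := by
  intro k
  induction k with
  | zero => simp
  | succ k ih =>
    intro hk1
    have hk : k ≤ p - 1 := by omega
    have hp1 : p - 1 + 1 = p := by have := hp.pos; omega
    have hchoose : (p-1).choose k + (p-1).choose (k+1) = p.choose (k+1) := by
      conv_rhs => rw [← hp1]
      exact (Nat.choose_succ_succ _ _).symm
    have hdvd : p ∣ p.choose (k+1) := hp.dvd_choose_self (Nat.succ_ne_zero k) (by omega)
    have hcast : ((p.choose (k+1) : ℕ) : K) = 0 := by
      obtain ⟨c, hc⟩ := hdvd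
      rw [hc]
      push_cast
      rw [CharP.cast_eq_zero K p, zero_mul]
    have h2 : (((p-1).choose k : ℕ) : K) + (((p-1).choose (k+1) : ℕ) : K) = 0 := by
      rw [← Nat.cast_add, hchoose, hcast]
    rw [ih hk] at h2
    have h3 := eq_neg_of_add_eq_zero_right h2
    rw [h3, pow_succ]
    ring

theorem stmt19 (p N t : ℕ) (hp : p.Prime) (hN : 1 ≤ N) (hNp : N ≤ p)
    (ht : t < N) (K : Type) [Field K] [CharP K p]
    (π : Fin (N + 1) → K)
    (hπ : ∀ i, π i ∈ Set.range (Nat.cast : ℕ → K))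
    (hzero : Nat.card {i : Fin (N + 1) // π i = 0} = t) :
    let Qc : MvPolynomial (Fin (N + 1)) K :=
      homogeneousComponent (p - 1) ((∏ i, (X i + 1)) ^ (p - 1))
    aeval (fun i : Fin (N + 1) => (X i : MvPolynomial (Fin (N + 1)) K) ^ (p - 1)) Qc ∈
      (pointIdeal π) ^ (p - N + t) := by
  intro Qc
  classical
  haveI : Fact p.Prime := ⟨hp⟩
  have hp2 := hp.two_le
  have hQcdef : Qc = homogeneousComponent (p - 1)
      ((∏ i, (X i + 1 : MvPolynomial (Fin (N + 1)) K)) ^ (p - 1)) := rfl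
  clear_value Qc
  -- find a nonzero coordinate
  have hexist : ∃ i₀, π i₀ ≠ 0 := by
    by_contra hcon
    push_neg at hcon
    have hcard : Nat.card {i : Fin (N+1) // π i = 0} = N + 1 := by
      rw [Nat.card_eq_fintype_card, Fintype.card_congr (Equiv.subtypeUnivEquiv hcon),
        Fintype.card_fin]
    omega
  obtain ⟨i₀, hi₀⟩ := hexist
  set m : ℕ := p - N + t with hm
  set c : Fin (N+1) → K := fun i => π i / π i₀ with hcdef
  set Y : Fin (N+1) → MvPolynomial (Fin (N+1)) K := fun i => X i - C (c i) * X i₀ with hYdef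
  set J : Ideal (MvPolynomial (Fin (N+1)) K) := Ideal.span (Set.range Y) with hJdef
  -- J is contained in the point ideal
  have hJI : J ≤ pointIdeal π := by
    rw [hJdef, Ideal.span_le]
    rintro f ⟨i, rfl⟩
    apply Ideal.subset_span
    constructor
    · exact ⟨1, (isHomogeneous_X K i).sub (isHomogeneous_C_mul_X (c i) i₀)⟩
    · rw [hYdef]
      simp only [map_sub, map_mul, eval_C, eval_X, hcdef]
      rw [div_mul_cancel₀ _ hi₀, sub_self]
  -- Fermat facts
  have hfrob : ∀ i, (π i)^p = π i := by
    intro i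
    obtain ⟨mm, hmm⟩ := hπ i
    rw [← hmm]
    have hzc : (ZMod.castHom (dvd_refl p) K) ((mm : ZMod p)) = (mm : K) := map_natCast _ mm
    rw [← hzc, ← map_pow, ZMod.pow_card]
  have hcpow : ∀ i, π i ≠ 0 → (c i)^(p-1) = 1 := by
    intro i hi
    have hcp : (c i)^p = c i := by
      rw [hcdef]
      simp only
      rw [div_pow, hfrob, hfrob]
    have hcne : c i ≠ 0 := by
      rw [hcdef]; exact div_ne_zero hi hi₀
    have hstep : c i ^ (p-1) * c i = 1 * c i := by
      rw [one_mul, ← pow_succ]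
      have hpp : p - 1 + 1 = p := by omega
      rw [hpp, hcp]
    exact mul_right_cancel₀ hcne hstep
  -- V and membership facts
  set w : MvPolynomial (Fin (N+1)) K := X i₀ ^ (p-1) with hwdef
  set V : Fin (N+1) → MvPolynomial (Fin (N+1)) K := fun i => X i ^ (p-1) - w with hVdef
  have hVi₀ : V i₀ = 0 := by rw [hVdef]; simp only; rw [hwdef, sub_self]
  have hYmem : ∀ i, Y i ∈ J := fun i => Ideal.subset_span ⟨i, rfl⟩
  have hXJ : ∀ i, π i = 0 → X i ∈ J := by
    intro i hi
    have : Y i = X i := by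
      rw [hYdef]; simp only
      rw [hcdef]; simp only
      rw [hi, zero_div, map_zero, zero_mul, sub_zero]
    rw [← this]; exact hYmem i
  have hVJ : ∀ i, π i ≠ 0 → V i ∈ J := by
    intro i hi
    have hq : Ideal.Quotient.mk J (X i) = Ideal.Quotient.mk J (C (c i) * X i₀) := by
      rw [Ideal.Quotient.mk_eq_mk_iff_sub_mem]
      exact hYmem i
    rw [← Ideal.Quotient.eq_zero_iff_mem, hVdef]
    simp only
    rw [map_sub, map_pow, hq, hwdef, map_pow, map_mul, mul_pow, ← map_pow, ← map_pow,
      hcpow i hi, C_1, map_one, one_mul, sub_self]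
  -- the counting substitution
  set g : Fin (N+1) → Polynomial (MvPolynomial (Fin (N+1)) K) := fun i =>
    if π i = 0 then Polynomial.X ^ (p-1) * Polynomial.C (X i ^ (p-1))
    else Polynomial.C w + Polynomial.X * Polynomial.C (V i) with hgdef
  have hg : ∀ i k, (g i).coeff k ∈ J ^ k := by
    intro i k
    by_cases hi : π i = 0
    · rw [hgdef]; simp only [if_pos hi]
      rw [Polynomial.coeff_X_pow_mul', Polynomial.coeff_C]
      split_ifs with h1 h2
      · have hkp : k = p - 1 := by omega
        subst hkp
        exact Ideal.pow_mem_pow (hXJ i hi) (p-1)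
      · exact zero_mem _
      · exact zero_mem _
    · rw [hgdef]; simp only [if_neg hi]
      match k with
      | 0 =>
        rw [pow_zero, Ideal.one_eq_top]
        exact Submodule.mem_top
      | 1 =>
        rw [Polynomial.coeff_add, Polynomial.coeff_C, if_neg (by omega : ¬ (1:ℕ) = 0),
          Polynomial.coeff_X_mul, Polynomial.coeff_C, if_pos rfl, zero_add, pow_one]
        exact hVJ i hi
      | (k+2) =>
        rw [Polynomial.coeff_add, Polynomial.coeff_C, if_neg (by omega : ¬ k+2 = 0),
          Polynomial.coeff_X_mul, Polynomial.coeff_C, if_neg (by omega : ¬ k+1 = 0), zero_add]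
        exact zero_mem _
  have hcomp : ∀ f : MvPolynomial (Fin (N+1)) K,
      Polynomial.eval 1 (aeval g f) = aeval (fun i : Fin (N+1) =>
        (X i : MvPolynomial (Fin (N+1)) K) ^ (p-1)) f := by
    intro f
    induction f using MvPolynomial.induction_on with
    | C a =>
      rw [aeval_C, aeval_C, Polynomial.algebraMap_apply, Polynomial.eval_C]
    | add f₁ f₂ ih₁ ih₂ => rw [map_add, map_add, Polynomial.eval_add, ih₁, ih₂]
    | mul_X f i ih =>
      rw [map_mul, map_mul, Polynomial.eval_mul, ih, aeval_X, aeval_X]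
      congr 1
      by_cases hi : π i = 0
      · rw [hgdef]; simp only [if_pos hi]
        rw [Polynomial.eval_mul, Polynomial.eval_pow, Polynomial.eval_X, Polynomial.eval_C,
          one_pow, one_mul]
      · rw [hgdef]; simp only [if_neg hi]
        rw [Polynomial.eval_add, Polynomial.eval_C, Polynomial.eval_mul, Polynomial.eval_X,
          Polynomial.eval_C, one_mul, hVdef]
        simp only
        rw [add_sub_cancel]
  -- index sets
  set Sc : Finset (Fin (N+1)) := Finset.univ.filter (fun i => ¬ π i = 0) with hScdef
  have hi₀Sc : i₀ ∈ Sc := by rw [hScdef]; exact Finset.mem_filter.mpr ⟨Finset.mem_univ _, hi₀⟩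
  set T' : Finset (Fin (N+1)) := Sc.erase i₀ with hT'def
  have hcardz : (Finset.univ.filter (fun i : Fin (N+1) => π i = 0)).card = t := by
    rw [← hzero, Nat.card_eq_fintype_card, Fintype.card_subtype]
  have hcards : Sc.card = N + 1 - t := by
    have hfc := Finset.card_filter_add_card_filter_not
      (s := (Finset.univ : Finset (Fin (N+1)))) (p := fun i => π i = 0)
    rw [hcardz, Finset.card_univ, Fintype.card_fin] at hfc
    rw [hScdef]
    omega
  have hT'card : T'.card = N - t := by
    rw [hT'def, Finset.card_erase_of_mem hi₀Sc, hcards]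
    omega
  have hT'ne : T'.Nonempty := by
    rw [← Finset.card_pos, hT'card]
    omega
  have hScmem : ∀ i, i ∉ Sc ↔ π i = 0 := by
    intro i
    rw [hScdef]
    simp
  -- the homogeneous component
  set F : Finset (Fin (N+1) → ℕ) :=
    (Fintype.piFinset fun _ : Fin (N+1) => Finset.range p).filter
      (fun a => ∑ i, a i = p - 1) with hFdef
  set H : MvPolynomial (Fin (N+1)) K := ∑ a ∈ F, ∏ i, X i ^ (a i) with hHdef
  have hQc : Qc = C ((-1:K)^(p-1)) * H := by
    have e1 : (∏ i, (X i + 1 : MvPolynomial (Fin (N+1)) K)) ^ (p-1)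
        = ∏ i, ((X i + 1)^(p-1)) := (Finset.prod_pow _ _ _).symm
    have e2 : ∀ i : Fin (N+1), ((X i + 1 : MvPolynomial (Fin (N+1)) K))^(p-1)
        = ∑ k ∈ Finset.range p, (X i)^k * ((p-1).choose k : MvPolynomial (Fin (N+1)) K) := by
      intro i
      rw [add_pow]
      have hp1 : p - 1 + 1 = p := by omega
      rw [hp1]
      refine Finset.sum_congr rfl fun k _ => ?_
      rw [one_pow, mul_one]
    have e3 : Qc = ∑ a ∈ Fintype.piFinset (fun _ : Fin (N+1) => Finset.range p),
        homogeneousComponent (p-1)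
          (∏ i, ((X i)^(a i) * ((p-1).choose (a i) : MvPolynomial (Fin (N+1)) K))) := by
      rw [hQcdef, e1, Finset.prod_congr rfl (fun i _ => e2 i), Finset.prod_univ_sum, map_sum]
    have e4 : ∀ a ∈ Fintype.piFinset (fun _ : Fin (N+1) => Finset.range p),
        homogeneousComponent (p-1)
            (∏ i, ((X i)^(a i) * ((p-1).choose (a i) : MvPolynomial (Fin (N+1)) K)))
          = if (∑ i, a i) = p-1
            then (∏ i, ((X i)^(a i) * ((p-1).choose (a i) : MvPolynomial (Fin (N+1)) K)))
            else 0 := by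
      intro a _
      have hhom : IsHomogeneous
          (∏ i, ((X i)^(a i) * ((p-1).choose (a i) : MvPolynomial (Fin (N+1)) K)))
          (∑ i, a i) := by
        apply IsHomogeneous.prod
        intro i _
        have hcast : ((((p-1).choose (a i) : ℕ)) : MvPolynomial (Fin (N+1)) K)
            = C (((p-1).choose (a i) : K)) := (map_natCast (C : K →+* _) _).symm
        rw [hcast, mul_comm]
        exact isHomogeneous_C_mul_X_pow _ _ _
      rw [homogeneousComponent_of_mem ((mem_homogeneousSubmodule _ _).mpr hhom)]
      by_cases hcnd : ∑ i, a i = p - 1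
      · rw [if_pos hcnd.symm, if_pos hcnd]
      · rw [if_neg (fun h => hcnd h.symm), if_neg hcnd]
    have e5 : ∀ a ∈ F,
        (∏ i, ((X i)^(a i) * ((p-1).choose (a i) : MvPolynomial (Fin (N+1)) K)))
          = C ((-1:K)^(p-1)) * ∏ i, (X i)^(a i) := by
      intro a ha
      rw [hFdef, Finset.mem_filter, Fintype.mem_piFinset] at ha
      obtain ⟨ha1, ha2⟩ := ha
      rw [Finset.prod_mul_distrib]
      have hcprod : (∏ i, (((p-1).choose (a i) : ℕ) : MvPolynomial (Fin (N+1)) K))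
          = C ((-1:K)^(p-1)) := by
        rw [← Nat.cast_prod, ← map_natCast (C : K →+* MvPolynomial (Fin (N+1)) K)
          (∏ i, (p-1).choose (a i))]
        congr 1
        rw [Nat.cast_prod]
        have hai : ∀ i, a i ≤ p - 1 := by
          intro i
          have := ha1 i
          rw [Finset.mem_range] at this
          omega
        calc ∏ i, (((p-1).choose (a i) : ℕ) : K)
            = ∏ i, (-1:K)^(a i) :=
              Finset.prod_congr rfl (fun i _ => chooseNeg hp (a i) (hai i))
          _ = (-1:K)^(∑ i, a i) := Finset.prod_pow_eq_pow_sum _ _ _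
          _ = (-1:K)^(p-1) := by rw [ha2]
      rw [hcprod, mul_comm]
    rw [e3, Finset.sum_congr rfl e4, ← Finset.sum_filter, ← hFdef,
      Finset.sum_congr rfl e5, ← Finset.mul_sum, hHdef]
  -- reduce to J-membership
  rw [hQc, map_mul, aeval_C]
  apply Ideal.mul_mem_left
  apply Ideal.pow_right_mono hJI m
  rw [← hcomp H]
  apply eval_one_mem J _ m (fun k => coeff_aeval_mem J g hg H k)
  -- vanishing of low coefficients
  intro k hkm
  have hkp2 : k ≤ p - 2 := by omega
  rw [hHdef, map_sum, Polynomial.finset_sum_coeff]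
  rw [← Finset.sum_filter_add_sum_filter_not F (fun a => ∀ i, π i = 0 → a i = 0)]
  set B : Finset (Fin (N+1) → ℕ) :=
    Fintype.piFinset (fun _ : Fin (N+1) => Finset.range p) with hBdef
  have hbad : ∑ a ∈ F.filter (fun a => ¬ ∀ i, π i = 0 → a i = 0),
      (Polynomial.coeff (aeval (R := K) g (∏ i, X i ^ (a i))) k) = 0 := by
    apply Finset.sum_eq_zero
    intro a ha
    rw [Finset.mem_filter] at ha
    obtain ⟨haF, hb⟩ := ha
    push_neg at hb
    obtain ⟨i1, hi1, hai1⟩ := hb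
    rw [hFdef, Finset.mem_filter, Fintype.mem_piFinset] at haF
    have heq : (aeval (R := K) g (∏ i, X i ^ (a i)) : Polynomial (MvPolynomial (Fin (N+1)) K))
        = ∏ i, (g i)^(a i) := by
      rw [map_prod]
      exact Finset.prod_congr rfl fun i _ => by rw [map_pow, aeval_X]
    have hgi1 : g i1 = Polynomial.X ^ (p-1) * Polynomial.C (X i1 ^ (p-1)) := by
      rw [hgdef]; simp only [if_pos hi1]
    rw [heq, ← Finset.mul_prod_erase Finset.univ _ (Finset.mem_univ i1), hgi1,
      mul_pow, ← pow_mul, ← Polynomial.C_pow, mul_assoc, Polynomial.coeff_X_pow_mul']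
    have hmul : p - 1 ≤ (p-1) * a i1 := Nat.le_mul_of_pos_right _ (by omega)
    rw [if_neg (by omega)]
  have hgoodsum : ∑ a ∈ F.filter (fun a => ∀ i, π i = 0 → a i = 0),
      (Polynomial.coeff (aeval (R := K) g (∏ i, X i ^ (a i))) k) = 0 := by
    have hA : ∀ a ∈ F.filter (fun a => ∀ i, π i = 0 → a i = 0),
        (Polynomial.coeff (aeval (R := K) g (∏ i, X i ^ (a i))) k)
        = ∑ b ∈ B, if (∑ i, b i) = k
            then ((∏ i, (V i)^(b i)) * w^(p-1-k))
              * ((∏ i, (a i).choose (b i) : ℕ) : MvPolynomial (Fin (N+1)) K)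
            else 0 := by
      intro a ha
      rw [Finset.mem_filter] at ha
      obtain ⟨haF, hagood⟩ := ha
      rw [hFdef, Finset.mem_filter, Fintype.mem_piFinset] at haF
      obtain ⟨haP, haS⟩ := haF
      have hap : ∀ i, a i < p := fun i => Finset.mem_range.mp (haP i)
      have h1 : (aeval (R := K) g (∏ i, X i ^ (a i)) : Polynomial (MvPolynomial (Fin (N+1)) K))
          = ∏ i, (Polynomial.C w + Polynomial.X * Polynomial.C (V i))^(a i) := by
        rw [map_prod]
        refine Finset.prod_congr rfl fun i _ => ?_
        rw [map_pow, aeval_X]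
        by_cases hi : π i = 0
        · rw [hagood i hi, pow_zero, pow_zero]
        · have hgi : g i = Polynomial.C w + Polynomial.X * Polynomial.C (V i) := by
            rw [hgdef]; simp only [if_neg hi]
          rw [hgi]
      have h2 : ∀ i : Fin (N+1),
          (Polynomial.C w + Polynomial.X * Polynomial.C (V i))^(a i)
          = ∑ b ∈ Finset.range (a i + 1),
              Polynomial.X ^ b * Polynomial.C ((V i)^b * w^(a i - b))
                * ((a i).choose b : Polynomial (MvPolynomial (Fin (N+1)) K)) := by
        intro i
        rw [add_comm (Polynomial.C w), add_pow]
        refine Finset.sum_congr rfl fun b _ => ?_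
        rw [mul_pow, ← Polynomial.C_pow, ← Polynomial.C_pow, mul_assoc (Polynomial.X ^ b),
          ← Polynomial.C_mul]
      rw [h1, Finset.prod_congr rfl (fun i _ => h2 i), Finset.prod_univ_sum,
        Polynomial.finset_sum_coeff]
      have h3 : ∀ b ∈ Fintype.piFinset (fun i => Finset.range (a i + 1)),
          Polynomial.coeff (∏ i, (Polynomial.X ^ (b i)
              * Polynomial.C ((V i)^(b i) * w^(a i - b i))
              * ((a i).choose (b i) : Polynomial (MvPolynomial (Fin (N+1)) K)))) k
          = if (∑ i, b i) = k
            then ((∏ i, (V i)^(b i)) * w^(p-1-k))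
              * ((∏ i, (a i).choose (b i) : ℕ) : MvPolynomial (Fin (N+1)) K)
            else 0 := by
        intro b hb
        rw [Fintype.mem_piFinset] at hb
        have hba : ∀ i, b i ≤ a i := fun i => by have := Finset.mem_range.mp (hb i); omega
        have h4 : (∏ i, (Polynomial.X ^ (b i)
              * Polynomial.C ((V i)^(b i) * w^(a i - b i))
              * ((a i).choose (b i) : Polynomial (MvPolynomial (Fin (N+1)) K))))
            = Polynomial.X ^ (∑ i, b i)
              * Polynomial.C (∏ i, ((V i)^(b i) * w^(a i - b i)))
              * ((∏ i, (a i).choose (b i) : ℕ) : Polynomial (MvPolynomial (Fin (N+1)) K)) := by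
          rw [Finset.prod_mul_distrib, Finset.prod_mul_distrib, Finset.prod_pow_eq_pow_sum,
            ← map_prod, Nat.cast_prod]
        rw [h4, coeff_term]
        by_cases hcnd : (∑ i, b i) = k
        · rw [if_pos hcnd, if_pos hcnd]
          congr 1
          rw [Finset.prod_mul_distrib, Finset.prod_pow_eq_pow_sum]
          have hsub : ∑ i, (a i - b i) = p - 1 - k := by
            rw [Finset.sum_tsub_distrib Finset.univ (fun i _ => hba i), haS, hcnd]
          rw [hsub]
        · rw [if_neg hcnd, if_neg hcnd]
      rw [Finset.sum_congr rfl h3]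
      apply Finset.sum_subset
      · apply Fintype.piFinset_subset
        intro i x hx
        rw [Finset.mem_range] at hx ⊢
        have := hap i; omega
      · intro b hbB hbnot
        rw [Fintype.mem_piFinset] at hbnot
        push_neg at hbnot
        obtain ⟨i1, hi1⟩ := hbnot
        rw [Finset.mem_range, not_lt] at hi1
        have hz : (∏ i, (a i).choose (b i)) = 0 :=
          Finset.prod_eq_zero (Finset.mem_univ i1) (Nat.choose_eq_zero_of_lt (by omega))
        rw [hz, Nat.cast_zero, mul_zero, ite_self]
    rw [Finset.sum_congr rfl hA, Finset.sum_comm]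
    apply Finset.sum_eq_zero
    intro b hbB
    by_cases hsk : (∑ i, b i) = k
    · simp only [if_pos hsk]
      rw [← Finset.mul_sum, ← Nat.cast_sum]
      by_cases hbi₀ : b i₀ = 0
      · by_cases hbS : ∀ i, π i = 0 → b i = 0
        · have hins : insert i₀ T' = Sc := by rw [hT'def]; exact Finset.insert_erase hi₀Sc
          have hEq : F.filter (fun a => ∀ i, π i = 0 → a i = 0) = DomE p (insert i₀ T') := by
            rw [hins]
            ext a
            rw [Finset.mem_filter, hFdef, Finset.mem_filter, Fintype.mem_piFinset, mem_DomE]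
            constructor
            · rintro ⟨⟨h1, h2⟩, h3⟩
              exact ⟨fun i => Finset.mem_range.mp (h1 i), h2,
                fun i hi => h3 i ((hScmem i).mp hi)⟩
            · rintro ⟨h1, h2, h3⟩
              exact ⟨⟨fun i => Finset.mem_range.mpr (h1 i), h2⟩,
                fun i hi => h3 i ((hScmem i).mpr hi)⟩
          have hdvd : p ∣ ∑ a ∈ F.filter (fun a => ∀ i, π i = 0 → a i = 0),
              ∏ i, (a i).choose (b i) := by
            rw [hEq]
            refine lemKey hp T' i₀ ?_ hT'ne b ?_ ?_
            · rw [hT'def]; exact Finset.notMem_erase i₀ Sc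
            · intro i hiT'
              by_cases hii : i = i₀
              · subst hii; exact hbi₀
              · apply hbS
                have hnSc : i ∉ Sc := by
                  intro hiSc
                  exact hiT' (by rw [hT'def]; exact Finset.mem_erase.mpr ⟨hii, hiSc⟩)
                exact (hScmem i).mp hnSc
            · rw [hT'card, hsk]
              omega
          obtain ⟨c0, hc0⟩ := hdvd
          rw [hc0]
          have hp0 : ((p : ℕ) : MvPolynomial (Fin (N+1)) K) = 0 := by
            rw [← map_natCast (C : K →+* MvPolynomial (Fin (N+1)) K) p,
              CharP.cast_eq_zero K p, map_zero]
          rw [Nat.cast_mul, hp0, zero_mul, mul_zero]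
        · push_neg at hbS
          obtain ⟨i1, hi1, hbi1⟩ := hbS
          have hzero' : ∑ a ∈ F.filter (fun a => ∀ i, π i = 0 → a i = 0),
              ∏ i, (a i).choose (b i) = 0 := by
            apply Finset.sum_eq_zero
            intro a ha
            rw [Finset.mem_filter] at ha
            have hai1 : a i1 = 0 := ha.2 i1 hi1
            exact Finset.prod_eq_zero (Finset.mem_univ i1)
              (by rw [hai1]; exact Nat.choose_eq_zero_of_lt (by omega))
          rw [hzero', Nat.cast_zero, mul_zero]
      · have hV0 : (∏ i, (V i)^(b i)) = 0 :=
          Finset.prod_eq_zero (Finset.mem_univ i₀) (by rw [hVi₀]; exact zero_pow hbi₀)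
        rw [hV0, zero_mul, zero_mul]
    · simp only [if_neg hsk]
      exact Finset.sum_const_zero
  rw [hgoodsum, hbad, add_zero]
end
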